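/- arXiv:1905.12447 — 4 statements merged into one kernel-verified Lean document; each statement's English description precedes it below -/
import Mathlib

section
/- Let k ≥ 1, 0 < s₀ ≤ 1, and let α: I_k|_{[0,s₀]} → M_r(ℂ) be a unital homomorphism. Let α̃ be the composition C[0,s₀] → I_k|_{[0,s₀]} → M_r(ℂ), where the first map is g ↦ g·1_k. Then the multiplicity of 0 in Sp α̃ is congruent to r modulo k; in particular #(Sp α̃ ∩ {0}) ≡ r (mod k). -/
noncomputable section

open scoped Matrix.Norms.L2Operator Kronecker
open Matrix

/-- `n × n` complex matrices, endowed (via the scoped `Matrix.L2OpNorm` instances)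
with the operator norm, i.e. regarded as a C*-algebra. -/
abbrev Mat (n : ℕ) : Type := Matrix (Fin n) (Fin n) ℂ

/-- `(l·k) × (l·k)` complex matrices, indexed by pairs. -/
abbrev MatP (l k : ℕ) : Type := Matrix (Fin l × Fin k) (Fin l × Fin k) ℂ

/-- A projection in a `*`-algebra: a self-adjoint idempotent. -/
def IsProj' {A : Type*} [Mul A] [Star A] (p : A) : Prop := p * p = p ∧ star p = p

/-- The Elliott dimension drop interval algebra `I_k`, realized as the star subalgebra of
`C([0,1], M_k(ℂ))` of functions which are scalar multiples of `1_k` at both endpoints. -/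
def dimDrop (k : ℕ) : StarSubalgebra ℂ C(unitInterval, Mat k) where
  carrier := {f | (∃ c : ℂ, f 0 = c • (1 : Mat k)) ∧ (∃ c : ℂ, f 1 = c • (1 : Mat k))}
  mul_mem' := by
    rintro f g ⟨⟨c, hc⟩, ⟨d, hd⟩⟩ ⟨⟨c', hc'⟩, ⟨d', hd'⟩⟩
    refine ⟨⟨c * c', ?_⟩, ⟨d * d', ?_⟩⟩ <;>
      simp [hc, hd, hc', hd', smul_smul, smul_mul_assoc, mul_smul_comm, mul_comm]
  one_mem' := ⟨⟨1, by simp⟩, ⟨1, by simp⟩⟩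
  add_mem' := by
    rintro f g ⟨⟨c, hc⟩, ⟨d, hd⟩⟩ ⟨⟨c', hc'⟩, ⟨d', hd'⟩⟩
    exact ⟨⟨c + c', by simp [hc, hc', add_smul]⟩, ⟨d + d', by simp [hd, hd', add_smul]⟩⟩
  zero_mem' := ⟨⟨0, by simp⟩, ⟨0, by simp⟩⟩
  algebraMap_mem' := fun r =>
    ⟨⟨r, by simp [Algebra.algebraMap_eq_smul_one]⟩, ⟨r, by simp [Algebra.algebraMap_eq_smul_one]⟩⟩
  star_mem' := by
    rintro f ⟨⟨c, hc⟩, ⟨d, hd⟩⟩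
    exact ⟨⟨starRingEnd ℂ c, by simp [hc]⟩, ⟨starRingEnd ℂ d, by simp [hd]⟩⟩

/-- The scalar value of `f ∈ I_k` at an endpoint (`f(0̲)` resp. `f(1̲)`), recovered via the
normalized trace. -/
def scalarAt {k : ℕ} (f : ↥(dimDrop k)) (t : unitInterval) : ℂ :=
  Matrix.trace ((f : C(unitInterval, Mat k)) t) / (k : ℂ)

/-- The canonical unital inclusion `C[0,1] → I_k`, `g ↦ g · 1_k`. -/
def scalarEmb (k : ℕ) (g : C(unitInterval, ℂ)) : ↥(dimDrop k) :=
  ⟨⟨fun t => g t • (1 : Mat k), (map_continuous g).smul continuous_const⟩,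
   ⟨⟨g 0, rfl⟩, ⟨g 1, rfl⟩⟩⟩

/-- The algebra `I_k|_{[0,s₀]}`: continuous `M_k(ℂ)`-valued functions on `[0, s₀]` that are a
scalar multiple of `1_k` at `0`. -/
def dimDropZero (k : ℕ) {s₀ : ℝ} (hs : 0 ≤ s₀) :
    StarSubalgebra ℂ C(↥(Set.Icc (0:ℝ) s₀), Mat k) where
  carrier := {f | ∃ c : ℂ, f ⟨0, Set.left_mem_Icc.2 hs⟩ = c • (1 : Mat k)}
  mul_mem' := by
    rintro f g ⟨c, hc⟩ ⟨c', hc'⟩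
    exact ⟨c * c', by simp [hc, hc', smul_smul, smul_mul_assoc, mul_smul_comm, mul_comm]⟩
  one_mem' := ⟨1, by simp⟩
  add_mem' := by
    rintro f g ⟨c, hc⟩ ⟨c', hc'⟩
    exact ⟨c + c', by simp [hc, hc', add_smul]⟩
  zero_mem' := ⟨0, by simp⟩
  algebraMap_mem' := fun r => ⟨r, by simp [Algebra.algebraMap_eq_smul_one]⟩
  star_mem' := by
    rintro f ⟨c, hc⟩
    exact ⟨starRingEnd ℂ c, by simp [hc]⟩

/-- The scalar value `f(0̲)` for `f ∈ I_k|_{[0,s₀]}`, recovered via the normalized trace. -/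
def scalarAtZero {k : ℕ} {s₀ : ℝ} {hs : 0 ≤ s₀} (f : ↥(dimDropZero k hs)) : ℂ :=
  Matrix.trace ((f : C(↥(Set.Icc (0:ℝ) s₀), Mat k)) ⟨0, Set.left_mem_Icc.2 hs⟩) / (k : ℂ)

/-- The canonical unital inclusion `C[0,s₀] → I_k|_{[0,s₀]}`, `g ↦ g · 1_k`. -/
def scalarEmbZero (k : ℕ) {s₀ : ℝ} (hs : 0 ≤ s₀) (g : C(↥(Set.Icc (0:ℝ) s₀), ℂ)) :
    ↥(dimDropZero k hs) :=
  ⟨⟨fun t => g t • (1 : Mat k), (map_continuous g).smul continuous_const⟩,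
   ⟨g ⟨0, Set.left_mem_Icc.2 hs⟩, rfl⟩⟩

/-- The block-scalar matrix `a ⊗ 1_k ∈ M_l(ℂ) ⊗ M_k(ℂ) = M_{lk}(ℂ)`. -/
def blockScalar (l k : ℕ) (a : Matrix (Fin l) (Fin l) ℂ) : MatP l k :=
  a ⊗ₖ (1 : Mat k)

lemma blockScalar_mul (l k : ℕ) (a b : Matrix (Fin l) (Fin l) ℂ) :
    blockScalar l k a * blockScalar l k b = blockScalar l k (a * b) := by
  unfold blockScalar
  rw [← Matrix.mul_kronecker_mul, Matrix.one_mul]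

lemma star_blockScalar (l k : ℕ) (a : Matrix (Fin l) (Fin l) ℂ) :
    star (blockScalar l k a) = blockScalar l k (star a) := by
  show (blockScalar l k a)ᴴ = blockScalar l k aᴴ
  ext ⟨i, s⟩ ⟨j, t⟩
  by_cases h : s = t <;>
    simp [blockScalar, Matrix.conjTranspose_apply, Matrix.one_apply, h, eq_comm]

/-- The algebra `M_l(I_k)`, realized as the star subalgebra of `C([0,1], M_{lk}(ℂ))` of
functions whose values at `0` and at `1` are of the form `a ⊗ 1_k` with `a ∈ M_l(ℂ)`. -/
def dimDropMat (l k : ℕ) : StarSubalgebra ℂ C(unitInterval, MatP l k) where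
  carrier := {f | (∃ a, f 0 = blockScalar l k a) ∧ (∃ a, f 1 = blockScalar l k a)}
  mul_mem' := by
    rintro f g ⟨⟨a, ha⟩, ⟨b, hb⟩⟩ ⟨⟨a', ha'⟩, ⟨b', hb'⟩⟩
    refine ⟨⟨a * a', ?_⟩, ⟨b * b', ?_⟩⟩ <;>
      simp [ha, hb, ha', hb', blockScalar_mul]
  one_mem' := ⟨⟨1, by simp [blockScalar, Matrix.one_kronecker_one]⟩,
    ⟨1, by simp [blockScalar, Matrix.one_kronecker_one]⟩⟩
  add_mem' := by
    rintro f g ⟨⟨a, ha⟩, ⟨b, hb⟩⟩ ⟨⟨a', ha'⟩, ⟨b', hb'⟩⟩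
    exact ⟨⟨a + a', by simp [ha, ha', blockScalar, Matrix.add_kronecker]⟩,
      ⟨b + b', by simp [hb, hb', blockScalar, Matrix.add_kronecker]⟩⟩
  zero_mem' := ⟨⟨0, by simp [blockScalar, Matrix.zero_kronecker]⟩,
    ⟨0, by simp [blockScalar, Matrix.zero_kronecker]⟩⟩
  algebraMap_mem' := fun r =>
    ⟨⟨r • 1, by simp [blockScalar, Matrix.smul_kronecker, Matrix.one_kronecker_one,
        Algebra.algebraMap_eq_smul_one]⟩,
     ⟨r • 1, by simp [blockScalar, Matrix.smul_kronecker, Matrix.one_kronecker_one,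
        Algebra.algebraMap_eq_smul_one]⟩⟩
  star_mem' := by
    rintro f ⟨⟨a, ha⟩, ⟨b, hb⟩⟩
    exact ⟨⟨star a, by simp [ha, ← star_blockScalar]⟩,
      ⟨star b, by simp [hb, ← star_blockScalar]⟩⟩

/-- `β` is simultaneously diagonalized by a unitary `u`, with spectrum the family `x`
(with multiplicity): `β g = u · diag(g(x i)) · u*` for all `g`. -/
def DiagRep {Z : Type*} [TopologicalSpace Z] {ι : Type*} [Fintype ι] [DecidableEq ι]
    (β : C(Z, ℂ) → Matrix ι ι ℂ) (x : ι → Z) : Prop :=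
  ∃ u ∈ unitary (Matrix ι ι ℂ), ∀ g : C(Z, ℂ),
    β g = u * Matrix.diagonal (fun i => g (x i)) * star u

/-- `β` is represented at a point of the corner algebra `P M_N(ℂ) P` with spectrum `t` and
mutually orthogonal rank-one projections `p` summing to `P`. -/
def CornerRep {Z : Type*} [TopologicalSpace Z] {N n : ℕ}
    (β : C(Z, ℂ) → Mat N) (P : Mat N) (t : Fin n → Z) (p : Fin n → Mat N) : Prop :=
  (∀ i, IsProj' (p i) ∧ (p i).rank = 1) ∧
  (Pairwise fun i j => p i * p j = 0) ∧
  (∑ i, p i) = P ∧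
  ∀ g : C(Z, ℂ), β g = ∑ i, g (t i) • p i

/-- Two `ι`-indexed families of points of a metric space can be paired within `η`. -/
def PairedWithin {α : Type*} [PseudoMetricSpace α] {ι : Type*} (x y : ι → α) (η : ℝ) : Prop :=
  ∃ σ : Equiv.Perm ι, ∀ i, dist (x i) (y (σ i)) < η

/-- `X` is (homeomorphic to) the underlying space of a finite simplicial complex. -/
def FinComplex (X : Type*) [TopologicalSpace X] : Prop :=
  ∃ (d : ℕ) (K : Geometry.SimplicialComplex ℝ (EuclideanSpace ℝ (Fin d))),
    K.faces.Finite ∧ Nonempty (X ≃ₜ ↥K.space)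

/-- `X` is (homeomorphic to) the underlying space of a finite simplicial complex of
dimension at most `m`. -/
def FinComplexDim (X : Type*) [TopologicalSpace X] (m : ℕ) : Prop :=
  ∃ (d : ℕ) (K : Geometry.SimplicialComplex ℝ (EuclideanSpace ℝ (Fin d))),
    K.faces.Finite ∧ (∀ s ∈ K.faces, s.card ≤ m + 1) ∧ Nonempty (X ≃ₜ ↥K.space)

/-- The continuous inclusion of a subset into a larger subset. -/
def setIncl {α : Type*} [TopologicalSpace α] {s t : Set α} (h : s ⊆ t) : C(↥s, ↥t) :=
  ⟨fun x => ⟨x.1, h x.2⟩, (continuous_subtype_val).subtype_mk _⟩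

/-- A tracial state on a complex star algebra. -/
def IsTracialState {A : Type*} [Ring A] [Algebra ℂ A] [StarRing A] (τ : A →ₗ[ℂ] ℂ) : Prop :=
  τ 1 = 1 ∧ (∀ a, 0 ≤ (τ (star a * a)).re ∧ (τ (star a * a)).im = 0) ∧
    ∀ a b, τ (a * b) = τ (b * a)

/-- The complexification `C(X, ℝ) → C(X, ℂ)` (identification `Aff T C(X) = C_ℝ(X)`). -/
def toComplexC {X : Type*} [TopologicalSpace X] (h : C(X, ℝ)) : C(X, ℂ) :=
  ⟨fun x => (h x : ℂ), Complex.continuous_ofReal.comp h.continuous⟩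

/-- The spectral distribution property `sdp(η₀, δ)` for a unital homomorphism
`φ : C(X) → M_K(I_k)`: at every point `y` of the spectrum of `M_K(I_k)`, every open
`η₀`-ball in `X` catches at least the fraction `δ` of `Sp φ_y` (counted with multiplicity,
as a homomorphism into `M_{Kk}(C[0,1])`). -/
def HasSdpMat {X : Type*} [MetricSpace X] {K k : ℕ}
    (φ : C(X, ℂ) →⋆ₐ[ℂ] ↥(dimDropMat K k)) (η₀ δ : ℝ) : Prop :=
  ∀ (x₀ : X) (y : unitInterval) (x : Fin K × Fin k → X),
    DiagRep (fun f => (φ f : C(unitInterval, MatP K k)) y) x →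
    δ * (K * k) ≤ ((Finset.univ.filter fun q => dist (x q) x₀ < η₀).card : ℝ)

/-- The 1-skeleton of a simplicial complex. -/
def oneSkeleton {E : Type*} [AddCommGroup E] [Module ℝ E]
    (K : Geometry.SimplicialComplex ℝ E) : Set E :=
  ⋃ s ∈ {s ∈ K.faces | s.card ≤ 2}, convexHull ℝ (s : Set E)

/-- The index grouping used to describe the multiset
`Θ(y) = {a₁(y)^{∼l₂k}, …, a_{l₁-1}(y)^{∼l₂k}, a_{l₁}(y)^{∼(l₂+r)k}}`. -/
def groupIdx (l₁ l₂ r : ℕ) (h : 0 < l₁) (i : Fin (l₁ * l₂ + r)) : Fin l₁ :=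
  ⟨min ((i : ℕ) / l₂) (l₁ - 1), lt_of_le_of_lt (min_le_right _ _) (Nat.sub_lt h Nat.one_pos)⟩

instance : CompactSpace ↥(Metric.closedBall (0:ℂ) 1) :=
  isCompact_iff_compactSpace.mp (isCompact_closedBall _ _)

/-! ### Auxiliary development for `stmt3` -/

section Stmt3Aux

set_option maxHeartbeats 1000000
set_option synthInstance.maxHeartbeats 400000

noncomputable instance (n : ℕ) : CStarAlgebra (Mat n) := Matrix.instCStarAlgebra

variable {s₀ : ℝ}

/-- `scalarEmbZero` as a unital star algebra homomorphism. -/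
def embHom (k : ℕ) (hs : 0 ≤ s₀) :
    C(↥(Set.Icc (0 : ℝ) s₀), ℂ) →⋆ₐ[ℂ] ↥(dimDropZero k hs) where
  toFun := scalarEmbZero k hs
  map_one' := Subtype.ext <| ContinuousMap.ext fun t => by
    simp [scalarEmbZero]
  map_mul' g g' := Subtype.ext <| ContinuousMap.ext fun t => by
    simp [scalarEmbZero, smul_smul, smul_mul_assoc, mul_smul_comm, mul_comm]
  map_zero' := Subtype.ext <| ContinuousMap.ext fun t => by simp [scalarEmbZero]
  map_add' g g' := Subtype.ext <| ContinuousMap.ext fun t => by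
    simp [scalarEmbZero, add_smul]
  commutes' c := Subtype.ext <| ContinuousMap.ext fun t => by
    simp [scalarEmbZero, Algebra.algebraMap_eq_smul_one]
  map_star' g := Subtype.ext <| ContinuousMap.ext fun t => by
    simp [scalarEmbZero]

/-- `α̃ = α ∘ ι` as a unital star algebra homomorphism. -/
def atHom (k r : ℕ) (hs : 0 ≤ s₀) (α : ↥(dimDropZero k hs) →⋆ₙₐ[ℂ] Mat r)
    (hα : α 1 = 1) : C(↥(Set.Icc (0 : ℝ) s₀), ℂ) →⋆ₐ[ℂ] Mat r where
  toFun g := α (embHom k hs g)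
  map_one' := by
    show α ((embHom k hs) 1) = 1
    rw [map_one (embHom k hs), hα]
  map_mul' g g' := by
    show α ((embHom k hs) (g * g')) = α ((embHom k hs) g) * α ((embHom k hs) g')
    rw [map_mul (embHom k hs), map_mul α]
  map_zero' := by
    show α ((embHom k hs) 0) = 0
    rw [map_zero (embHom k hs), map_zero α]
  map_add' g g' := by
    show α ((embHom k hs) (g + g')) = α ((embHom k hs) g) + α ((embHom k hs) g')
    rw [map_add (embHom k hs), map_add α]
  commutes' c := by
    show α ((embHom k hs) (algebraMap ℂ _ c)) = algebraMap ℂ (Mat r) c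
    rw [AlgHomClass.commutes (embHom k hs) c, Algebra.algebraMap_eq_smul_one,
      map_smul α, hα, Algebra.algebraMap_eq_smul_one]
  map_star' g := by
    show α ((embHom k hs) (star g)) = star (α ((embHom k hs) g))
    rw [map_star (embHom k hs), map_star α]

lemma atHom_continuous (k r : ℕ) (hs : 0 ≤ s₀) (α : ↥(dimDropZero k hs) →⋆ₙₐ[ℂ] Mat r)
    (hα : α 1 = 1) : Continuous (atHom k r hs α hα) :=
  AddMonoidHomClass.continuous_of_bound (atHom k r hs α hα) 1 fun g => by
    simpa [one_mul] using NonUnitalStarAlgHom.norm_apply_le (atHom k r hs α hα) g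

/-- The diagonal star algebra homomorphism `g ↦ u ⬝ diag (g ∘ z) ⬝ u*`. -/
def diagHom {n : ℕ} {Z : Type*} [TopologicalSpace Z] (u : Mat n)
    (hu : u ∈ unitary (Mat n)) (z : Fin n → Z) : C(Z, ℂ) →⋆ₐ[ℂ] Mat n where
  toFun g := u * Matrix.diagonal (fun i => g (z i)) * star u
  map_one' := by
    show u * Matrix.diagonal (fun i => (1 : C(Z, ℂ)) (z i)) * star u = 1
    have h2 : u * star u = 1 := (Unitary.mem_iff.mp hu).2
    have hd : (fun i : Fin n => (1 : C(Z, ℂ)) (z i)) = fun _ => (1 : ℂ) := rfl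
    rw [hd, Matrix.diagonal_one, mul_one, h2]
  map_mul' g g' := by
    show u * Matrix.diagonal (fun i => (g * g') (z i)) * star u =
      (u * Matrix.diagonal (fun i => g (z i)) * star u) *
        (u * Matrix.diagonal (fun i => g' (z i)) * star u)
    have h1 : ∀ X : Mat n, star u * (u * X) = X := fun X => by
      rw [← mul_assoc, (Unitary.mem_iff.mp hu).1, one_mul]
    have hd : Matrix.diagonal (fun i => (g * g') (z i)) =
        Matrix.diagonal (fun i => g (z i)) * Matrix.diagonal (fun i => g' (z i)) := by
      rw [Matrix.diagonal_mul_diagonal]; rfl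
    rw [hd]
    simp only [mul_assoc, h1]
  map_zero' := by
    show u * Matrix.diagonal (fun i => (0 : C(Z, ℂ)) (z i)) * star u = 0
    have hd : (fun i : Fin n => (0 : C(Z, ℂ)) (z i)) = fun _ => (0 : ℂ) := rfl
    rw [hd, Matrix.diagonal_zero, mul_zero, zero_mul]
  map_add' g g' := by
    show u * Matrix.diagonal (fun i => (g + g') (z i)) * star u =
      u * Matrix.diagonal (fun i => g (z i)) * star u +
        u * Matrix.diagonal (fun i => g' (z i)) * star u
    have hd : Matrix.diagonal (fun i => (g + g') (z i)) =
        Matrix.diagonal (fun i => g (z i)) + Matrix.diagonal (fun i => g' (z i)) := by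
      exact (Matrix.diagonal_add (fun i => g (z i)) (fun i => g' (z i))).symm
    rw [hd, mul_add, add_mul]
  commutes' c := by
    show u * Matrix.diagonal (fun i => (algebraMap ℂ C(Z, ℂ) c) (z i)) * star u =
      algebraMap ℂ (Mat n) c
    have h2 : u * star u = 1 := (Unitary.mem_iff.mp hu).2
    have hd : Matrix.diagonal (fun i : Fin n => (algebraMap ℂ C(Z, ℂ) c) (z i))
        = c • (1 : Mat n) := by
      have : (fun i : Fin n => (algebraMap ℂ C(Z, ℂ) c) (z i)) = fun _ => c := by
        funext i; simp
      rw [this, Matrix.smul_one_eq_diagonal]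
    rw [hd, mul_smul_comm, smul_mul_assoc, mul_one, h2, Algebra.algebraMap_eq_smul_one]
  map_star' g := by
    show u * Matrix.diagonal (fun i => (star g) (z i)) * star u =
      star (u * Matrix.diagonal (fun i => g (z i)) * star u)
    have hd : Matrix.diagonal (fun i => (star g) (z i)) =
        star (Matrix.diagonal fun i => g (z i)) := by
      have : (fun i => (star g) (z i)) = star fun i => g (z i) := rfl
      rw [this, Matrix.star_eq_conjTranspose, Matrix.diagonal_conjTranspose]
    rw [hd, StarMul.star_mul, StarMul.star_mul, star_star, mul_assoc]

lemma diagHom_continuous {n : ℕ} {Z : Type*} [TopologicalSpace Z] (u : Mat n)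
    (hu : u ∈ unitary (Mat n)) (z : Fin n → Z) : Continuous (diagHom u hu z) := by
  let L : (Fin n → ℂ) →ₗ[ℂ] Mat n :=
    { toFun := fun v => u * Matrix.diagonal v * star u
      map_add' := fun v w => by
        show u * Matrix.diagonal (v + w) * star u =
          u * Matrix.diagonal v * star u + u * Matrix.diagonal w * star u
        have hd : Matrix.diagonal (v + w) = Matrix.diagonal v + Matrix.diagonal w :=
          (Matrix.diagonal_add v w).symm
        rw [hd, mul_add, add_mul]
      map_smul' := fun c v => by
        show u * Matrix.diagonal (c • v) * star u =
          (RingHom.id ℂ) c • (u * Matrix.diagonal v * star u)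
        rw [Matrix.diagonal_smul, mul_smul_comm, smul_mul_assoc, RingHom.id_apply] }
  have h : ⇑(diagHom u hu z) = fun g : C(Z, ℂ) => L (fun i => g (z i)) := rfl
  rw [h]
  exact L.continuous_of_finiteDimensional.comp
    (continuous_pi fun i => continuous_eval_const (z i))

/-- The complexification map as a real algebra homomorphism. -/
def toComplexAlgHom {X : Type*} [TopologicalSpace X] : C(X, ℝ) →ₐ[ℝ] C(X, ℂ) where
  toFun := toComplexC
  map_one' := ContinuousMap.ext fun x => by simp [toComplexC]
  map_mul' f g := ContinuousMap.ext fun x => by simp [toComplexC]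
  map_zero' := ContinuousMap.ext fun x => by simp [toComplexC]
  map_add' f g := ContinuousMap.ext fun x => by simp [toComplexC]
  commutes' c := ContinuousMap.ext fun x => by simp [toComplexC]

lemma toComplexC_continuous {X : Type*} [TopologicalSpace X] :
    Continuous (toComplexC (X := X)) := by
  have h : (toComplexC (X := X)) =
      (ContinuousMap.comp ⟨Complex.ofReal, Complex.continuous_ofReal⟩ :
        C(X, ℝ) → C(X, ℂ)) := by
    funext g; rfl
  rw [h]
  exact ContinuousMap.continuous_postcomp _

/-- Decomposition of a complex-valued map into real and imaginary parts. -/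
lemma decomposeC {X : Type*} [TopologicalSpace X] (g : C(X, ℂ)) :
    g = toComplexC ⟨fun x => (g x).re, Complex.continuous_re.comp g.continuous⟩ +
        Complex.I • toComplexC ⟨fun x => (g x).im, Complex.continuous_im.comp g.continuous⟩ := by
  ext x
  simp only [ContinuousMap.add_apply, ContinuousMap.smul_apply, toComplexC,
    ContinuousMap.coe_mk, smul_eq_mul]
  rw [mul_comm]
  exact (Complex.re_add_im (g x)).symm

lemma exists_diagRep (k r : ℕ) (hs : 0 ≤ s₀) (α : ↥(dimDropZero k hs) →⋆ₙₐ[ℂ] Mat r)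
    (hα : α 1 = 1) :
    ∃ z : Fin r → ↥(Set.Icc (0 : ℝ) s₀),
      DiagRep (fun g => α (scalarEmbZero k hs g)) z := by
  classical
  set X : Set ℝ := Set.Icc (0 : ℝ) s₀ with hX
  set Φ : C(↥X, ℂ) →⋆ₐ[ℂ] Mat r := atHom k r hs α hα with hΦ
  set ι : C(↥X, ℂ) := toComplexC (ContinuousMap.restrict X (ContinuousMap.id ℝ)) with hι
  have hstar : star ι = ι := by
    ext x
    simp [hι, toComplexC, Complex.conj_ofReal]
  have hherm : (Φ ι).IsHermitian := by
    show (Φ ι)ᴴ = Φ ι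
    rw [← Matrix.star_eq_conjTranspose, ← map_star Φ, hstar]
  have hevmem : ∀ i, hherm.eigenvalues i ∈ X := by
    intro i
    have h1 : (hherm.eigenvalues i : ℂ) ∈ spectrum ℂ (Φ ι) :=
      spectrum.algebraMap_mem ℂ (hherm.eigenvalues_mem_spectrum_real i)
    have h2 : spectrum ℂ (Φ ι) ⊆ spectrum ℂ ι := AlgHom.spectrum_apply_subset Φ.toAlgHom ι
    have h3 : spectrum ℂ ι = Set.range ι := ContinuousMap.spectrum_eq_range ι
    obtain ⟨x, hx⟩ := h3 ▸ h2 h1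
    have hx' : ((x : ℝ) : ℂ) = (hherm.eigenvalues i : ℂ) := hx
    have : (x : ℝ) = hherm.eigenvalues i := by exact_mod_cast hx'
    exact this ▸ x.2
  set z : Fin r → ↥X := fun i => ⟨hherm.eigenvalues i, hevmem i⟩ with hz
  have hUmem : (hherm.eigenvectorUnitary : Mat r) ∈ unitary (Mat r) :=
    hherm.eigenvectorUnitary.2
  set U : Mat r := (hherm.eigenvectorUnitary : Mat r) with hU
  have key : Φ = diagHom U hUmem z := by
    have hre : (Φ.toAlgHom.restrictScalars ℝ).comp toComplexAlgHom
        = ((diagHom U hUmem z).toAlgHom.restrictScalars ℝ).comp toComplexAlgHom := by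
      apply ContinuousMap.algHom_ext_map_X
      · show Continuous fun h : C(↥X, ℝ) => Φ (toComplexC h)
        exact (atHom_continuous k r hs α hα).comp toComplexC_continuous
      · show Continuous fun h : C(↥X, ℝ) => (diagHom U hUmem z) (toComplexC h)
        exact (diagHom_continuous U hUmem z).comp toComplexC_continuous
      · show Φ (toComplexC ((Polynomial.X : Polynomial ℝ).toContinuousMapOn X))
          = (diagHom U hUmem z) (toComplexC ((Polynomial.X : Polynomial ℝ).toContinuousMapOn X))
        rw [Polynomial.toContinuousMapOn_X_eq_restrict_id]
        show Φ ι = U * Matrix.diagonal (fun i => ι (z i)) * star U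
        have hdiag : (fun i => ι (z i))
            = fun i => (RCLike.ofReal ∘ hherm.eigenvalues) i := by
          funext i; rfl
        rw [hdiag]
        exact hherm.spectral_theorem
    apply StarAlgHom.ext
    intro g
    have h1 : ∀ h : C(↥X, ℝ), Φ (toComplexC h) = (diagHom U hUmem z) (toComplexC h) :=
      fun h => DFunLike.congr_fun hre h
    have hdec := decomposeC g
    rw [hdec, map_add, map_add, map_smul Φ, map_smul (diagHom U hUmem z), h1, h1]
  refine ⟨z, U, hUmem, fun g => ?_⟩
  show Φ g = U * Matrix.diagonal (fun i => g (z i)) * star U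
  rw [key]
  rfl

/-- A scalar multiple of a matrix unit, as an element of `I_k|_{[0,s₀]}`. -/
def elt (k : ℕ) (hs : 0 ≤ s₀) (h : C(↥(Set.Icc (0 : ℝ) s₀), ℝ))
    (h0 : h ⟨0, Set.left_mem_Icc.2 hs⟩ = 0) (i j : Fin k) : ↥(dimDropZero k hs) :=
  ⟨⟨fun t => (h t : ℂ) • Matrix.single i j 1,
      (Complex.continuous_ofReal.comp h.continuous).smul continuous_const⟩,
    ⟨0, by simp [h0]⟩⟩

lemma elt_eq_of_eq (k : ℕ) (hs : 0 ≤ s₀) {h h' : C(↥(Set.Icc (0 : ℝ) s₀), ℝ)}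
    (hh : h = h') (h0 : h ⟨0, Set.left_mem_Icc.2 hs⟩ = 0) (i j : Fin k) :
    elt k hs h h0 i j = elt k hs h' (hh ▸ h0) i j := by
  subst hh; rfl

lemma elt_mul (k : ℕ) (hs : 0 ≤ s₀) (h h' : C(↥(Set.Icc (0 : ℝ) s₀), ℝ))
    (h0 : h ⟨0, Set.left_mem_Icc.2 hs⟩ = 0) (h0' : h' ⟨0, Set.left_mem_Icc.2 hs⟩ = 0)
    (h0'' : (h * h') ⟨0, Set.left_mem_Icc.2 hs⟩ = 0) (i j l : Fin k) :
    elt k hs h h0 i j * elt k hs h' h0' j l = elt k hs (h * h') h0'' i l := by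
  refine Subtype.ext (ContinuousMap.ext fun t => ?_)
  show ((h t : ℂ) • Matrix.single i j (1:ℂ)) * ((h' t : ℂ) • Matrix.single j l (1:ℂ))
      = ((h * h') t : ℂ) • Matrix.single i l (1:ℂ)
  rw [smul_mul_smul_comm, Matrix.single_mul_single_same, one_mul,
    ContinuousMap.mul_apply, Complex.ofReal_mul]

lemma elt_add (k : ℕ) (hs : 0 ≤ s₀) (h h' : C(↥(Set.Icc (0 : ℝ) s₀), ℝ))
    (h0 : h ⟨0, Set.left_mem_Icc.2 hs⟩ = 0) (h0' : h' ⟨0, Set.left_mem_Icc.2 hs⟩ = 0)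
    (h0'' : (h + h') ⟨0, Set.left_mem_Icc.2 hs⟩ = 0) (i j : Fin k) :
    elt k hs (h + h') h0'' i j = elt k hs h h0 i j + elt k hs h' h0' i j := by
  refine Subtype.ext (ContinuousMap.ext fun t => ?_)
  show ((h + h') t : ℂ) • Matrix.single i j (1:ℂ)
      = (h t : ℂ) • Matrix.single i j 1 + (h' t : ℂ) • Matrix.single i j 1
  rw [ContinuousMap.add_apply, Complex.ofReal_add, add_smul]

lemma elt_star (k : ℕ) (hs : 0 ≤ s₀) (h : C(↥(Set.Icc (0 : ℝ) s₀), ℝ))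
    (h0 : h ⟨0, Set.left_mem_Icc.2 hs⟩ = 0) (i j : Fin k) :
    star (elt k hs h h0 i j) = elt k hs h h0 j i := by
  refine Subtype.ext (ContinuousMap.ext fun t => ?_)
  show star ((h t : ℂ) • Matrix.single i j (1:ℂ)) = (h t : ℂ) • Matrix.single j i (1:ℂ)
  rw [star_smul, Complex.star_def, Complex.conj_ofReal]
  congr 1
  rw [Matrix.star_eq_conjTranspose]
  ext a b
  simp only [Matrix.conjTranspose_apply, Matrix.single, Matrix.of_apply]
  by_cases hc : i = b ∧ j = a
  · obtain ⟨rfl, rfl⟩ := hc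
    simp
  · rw [if_neg hc, if_neg fun hc' => hc ⟨hc'.2, hc'.1⟩, star_zero]

lemma elt_sum (k : ℕ) (hs : 0 ≤ s₀) (h : C(↥(Set.Icc (0 : ℝ) s₀), ℝ))
    (h0 : h ⟨0, Set.left_mem_Icc.2 hs⟩ = 0) :
    (∑ j : Fin k, elt k hs h h0 j j) = scalarEmbZero k hs (toComplexC h) := by
  refine Subtype.ext (ContinuousMap.ext fun t => ?_)
  have hcoe : ((∑ j : Fin k, elt k hs h h0 j j : ↥(dimDropZero k hs)) :
      C(↥(Set.Icc (0 : ℝ) s₀), Mat k))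
      = ∑ j : Fin k, ((elt k hs h h0 j j : ↥(dimDropZero k hs)) :
        C(↥(Set.Icc (0 : ℝ) s₀), Mat k)) :=
    AddSubmonoidClass.coe_finset_sum _ _
  rw [hcoe, ContinuousMap.sum_apply]
  show (∑ j : Fin k, (h t : ℂ) • Matrix.single j j (1:ℂ)) = (h t : ℂ) • (1 : Mat k)
  rw [← Finset.smul_sum]
  congr 1
  ext a b
  by_cases hab : a = b
  · subst hab
    simp [Matrix.sum_apply, Matrix.single, Matrix.one_apply]
  · simp [Matrix.sum_apply, Matrix.single, Matrix.one_apply, hab,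
      fun j => show ¬(j = a ∧ j = b) from fun ⟨h1, h2⟩ => hab (h1 ▸ h2 ▸ rfl)]

lemma eq_zero_of_sum_star_mul_self {n : ℕ} {ι : Type*} [Fintype ι] (d : ι → Mat n)
    (h : ∑ j, star (d j) * d j = 0) : ∀ j, d j = 0 := by
  classical
  have key : ∀ M : Mat n, (star M * M).trace
      = ((∑ p, ∑ q, Complex.normSq (M q p) : ℝ) : ℂ) := by
    intro M
    rw [Matrix.trace]
    push_cast
    refine Finset.sum_congr rfl fun p _ => ?_
    rw [Matrix.diag_apply, Matrix.mul_apply]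
    refine Finset.sum_congr rfl fun q _ => ?_
    rw [Matrix.star_eq_conjTranspose, Matrix.conjTranspose_apply, mul_comm, Complex.star_def, Complex.mul_conj]
  have hsum : (∑ j, ((∑ p, ∑ q, Complex.normSq (d j q p) : ℝ) : ℂ)) = 0 := by
    calc ∑ j, ((∑ p, ∑ q, Complex.normSq (d j q p) : ℝ) : ℂ)
        = ∑ j, (star (d j) * d j).trace :=
          Finset.sum_congr rfl fun j _ => (key (d j)).symm
      _ = (∑ j, star (d j) * d j).trace := (Matrix.trace_sum _ _).symm
      _ = 0 := by rw [h, Matrix.trace_zero]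
  have hreal : (∑ j, ∑ p, ∑ q, Complex.normSq (d j q p)) = 0 := by exact_mod_cast hsum
  intro j
  have hj : (∑ p, ∑ q, Complex.normSq (d j q p)) = 0 :=
    (Finset.sum_eq_zero_iff_of_nonneg fun j _ =>
      Finset.sum_nonneg fun _ _ => Finset.sum_nonneg fun _ _ => Complex.normSq_nonneg _).mp
      hreal j (Finset.mem_univ j)
  ext a b
  have hp : (∑ q, Complex.normSq (d j q b)) = 0 :=
    (Finset.sum_eq_zero_iff_of_nonneg fun p _ =>
      Finset.sum_nonneg fun _ _ => Complex.normSq_nonneg _).mp hj b (Finset.mem_univ b)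
  have hq : Complex.normSq (d j a b) = 0 :=
    (Finset.sum_eq_zero_iff_of_nonneg fun q _ => Complex.normSq_nonneg _).mp hp a
      (Finset.mem_univ a)
  simpa using Complex.normSq_eq_zero.mp hq

lemma trace_nat_of_proj {n : ℕ} {p : Mat n} (hherm : p.IsHermitian) (hidem : p * p = p) :
    ∃ m : ℕ, p.trace = (m : ℂ) := by
  classical
  have hV1 : star (hherm.eigenvectorUnitary : Mat n) * (hherm.eigenvectorUnitary : Mat n) = 1 :=
    Matrix.mem_unitaryGroup_iff'.mp hherm.eigenvectorUnitary.2
  set V : Mat n := (hherm.eigenvectorUnitary : Mat n) with hV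
  set D : Mat n := Matrix.diagonal (RCLike.ofReal ∘ hherm.eigenvalues) with hD
  have hspec : p = V * D * star V := hherm.spectral_theorem
  have htr : p.trace = D.trace := by
    rw [hspec, Matrix.trace_mul_cycle, hV1, one_mul]
  have hcan : ∀ Y : Mat n, star V * (V * Y) = Y := fun Y => by
    rw [← mul_assoc, hV1, one_mul]
  have hDD : D * D = D := by
    have h2 := hidem
    rw [hspec] at h2
    have h1 : V * (D * (D * star V)) = V * (D * star V) := by
      simpa only [mul_assoc, hcan] using h2
    have h4 : D * (D * star V) = D * star V := by
      have := congrArg (fun Y => star V * Y) h1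
      simpa only [hcan] using this
    have h5 : D * (D * (star V * V)) = D * (star V * V) := by
      have := congrArg (fun Y => Y * V) h4
      simpa only [mul_assoc] using this
    rw [hV1] at h5
    simpa only [mul_one] using h5
  have hev : ∀ i, hherm.eigenvalues i = 0 ∨ hherm.eigenvalues i = 1 := by
    intro i
    have hii : (D * D) i i = D i i := by rw [hDD]
    rw [hD, Matrix.diagonal_mul_diagonal, Matrix.diagonal_apply_eq,
      Matrix.diagonal_apply_eq] at hii
    simp only [Function.comp_apply] at hii
    have hr2 : hherm.eigenvalues i * hherm.eigenvalues i = hherm.eigenvalues i := by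
      exact_mod_cast hii
    have hfac : hherm.eigenvalues i * (hherm.eigenvalues i - 1) = 0 := by
      linear_combination hr2
    rcases mul_eq_zero.mp hfac with h' | h'
    · exact Or.inl h'
    · exact Or.inr (by linarith [sub_eq_zero.mp h'])
  refine ⟨(Finset.univ.filter fun i => hherm.eigenvalues i = 1).card, ?_⟩
  rw [htr, hD, Matrix.trace_diagonal, ← Finset.sum_boole]
  refine Finset.sum_congr rfl fun i _ => ?_
  rcases hev i with h' | h' <;> simp [h']

lemma congr_of_diagRep (k r : ℕ) (hk : 1 ≤ k) (hs : 0 < s₀)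
    (α : ↥(dimDropZero k hs.le) →⋆ₙₐ[ℂ] Mat r)
    (z : Fin r → ↥(Set.Icc (0 : ℝ) s₀)) (u : Mat r) (hu : u ∈ unitary (Mat r))
    (hrep : ∀ g : C(↥(Set.Icc (0 : ℝ) s₀), ℂ),
      α (scalarEmbZero k hs.le g) = u * Matrix.diagonal (fun i => g (z i)) * star u) :
    (Finset.univ.filter fun i => ((z i : ℝ) = 0)).card ≡ r [MOD k] := by
  classical
  set x0 : ↥(Set.Icc (0 : ℝ) s₀) := ⟨0, Set.left_mem_Icc.2 hs.le⟩ with hx0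
  -- a positive lower bound for the nonzero points of the spectrum
  set S : Finset ℝ :=
    insert s₀ ((Finset.univ.filter fun i => (z i : ℝ) ≠ 0).image fun i => (z i : ℝ)) with hS
  have hSne : S.Nonempty := ⟨s₀, Finset.mem_insert_self _ _⟩
  set ε : ℝ := S.min' hSne with he
  have hε0 : 0 < ε := by
    have hmem := S.min'_mem hSne
    rcases Finset.mem_insert.mp hmem with h | h
    · rw [← he] at h
      exact h ▸ hs
    · obtain ⟨i, hi, hzi⟩ := Finset.mem_image.mp h
      have hne : (z i : ℝ) ≠ 0 := (Finset.mem_filter.mp hi).2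
      have h0le : 0 ≤ (z i : ℝ) := (z i).2.1
      rw [← he] at hzi
      exact hzi ▸ lt_of_le_of_ne h0le (Ne.symm hne)
  have hεle : ∀ i, (z i : ℝ) ≠ 0 → ε ≤ (z i : ℝ) := fun i hi =>
    Finset.min'_le _ _ (Finset.mem_insert_of_mem
      (Finset.mem_image_of_mem _ (Finset.mem_filter.mpr ⟨Finset.mem_univ i, hi⟩)))
  -- bump functions
  set w : C(↥(Set.Icc (0 : ℝ) s₀), ℝ) := ⟨fun t => min ((t : ℝ) / ε) 1,
    (continuous_subtype_val.div_const ε).min continuous_const⟩ with hw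
  have hw0 : w x0 = 0 := by
    show min ((0 : ℝ) / ε) 1 = 0
    rw [zero_div]
    exact min_eq_left zero_le_one
  have hwnn : ∀ t, 0 ≤ w t := fun t => le_min (div_nonneg t.2.1 hε0.le) zero_le_one
  have hwle : ∀ t, w t ≤ 1 := fun t => min_le_right _ _
  have hwz1 : ∀ i, (z i : ℝ) ≠ 0 → w (z i) = 1 := fun i hi =>
    min_eq_right ((one_le_div hε0).mpr (hεle i hi))
  have hwz0 : ∀ i, (z i : ℝ) = 0 → w (z i) = 0 := fun i hi => by
    show min (((z i : ℝ)) / ε) 1 = 0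
    rw [hi, zero_div]
    exact min_eq_left zero_le_one
  -- square roots
  set gq : C(↥(Set.Icc (0 : ℝ) s₀), ℝ) :=
    ⟨fun t => Real.sqrt (w t), Real.continuous_sqrt.comp w.continuous⟩ with hgq
  have hgq0 : gq x0 = 0 := by
    show Real.sqrt (w x0) = 0
    rw [hw0, Real.sqrt_zero]
  have hgg : gq * gq = w := ContinuousMap.ext fun t => Real.mul_self_sqrt (hwnn t)
  set c : C(↥(Set.Icc (0 : ℝ) s₀), ℝ) := ⟨fun t => Real.sqrt (w t - w t * w t),
    Real.continuous_sqrt.comp (w.continuous.sub (w.continuous.mul w.continuous))⟩ with hcdef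
  have hc0 : c x0 = 0 := by
    show Real.sqrt (w x0 - w x0 * w x0) = 0
    rw [hw0]
    norm_num
  have hcc : c * c = w - w * w := ContinuousMap.ext fun t => by
    show Real.sqrt (w t - w t * w t) * Real.sqrt (w t - w t * w t) = (w - w * w) t
    rw [Real.mul_self_sqrt (by nlinarith [hwnn t, hwle t])]
    rfl
  -- membership proofs at 0
  have hww0 : (w * w) x0 = 0 := by
    show w x0 * w x0 = 0
    rw [hw0, mul_zero]
  have hgg0 : (gq * gq) x0 = 0 := by
    show gq x0 * gq x0 = 0
    rw [hgq0, mul_zero]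
  have hcc0 : (c * c) x0 = 0 := by
    show c x0 * c x0 = 0
    rw [hc0, mul_zero]
  have hsub0 : (w - w * w) x0 = 0 := by
    show w x0 - (w * w) x0 = 0
    rw [hw0, hww0, sub_zero]
  -- the elements d j are zero
  set i0 : Fin k := ⟨0, hk⟩ with hi0
  set d : Fin k → Mat r := fun j => α (elt k hs.le c hc0 i0 j) with hd
  have hdj : ∀ j, star (d j) * d j = α (elt k hs.le (c * c) hcc0 j j) := by
    intro j
    rw [hd]
    show star (α (elt k hs.le c hc0 i0 j)) * α (elt k hs.le c hc0 i0 j) = _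
    rw [← map_star α, elt_star, ← map_mul α, elt_mul k hs.le c c hc0 hc0 hcc0 j i0 j]
  have hdsum : (∑ j : Fin k, star (d j) * d j) = 0 := by
    have h1 : (∑ j : Fin k, star (d j) * d j) = α (scalarEmbZero k hs.le (toComplexC (c * c))) := by
      rw [Finset.sum_congr rfl fun j _ => hdj j, ← map_sum α, elt_sum]
    rw [h1, hrep]
    have h2 : (fun i => (toComplexC (c * c)) (z i)) = fun _ => (0 : ℂ) := by
      funext i
      show (((c * c) (z i) : ℝ) : ℂ) = 0
      have : (c * c) (z i) = 0 := by
        rw [hcc]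
        show w (z i) - (w * w) (z i) = 0
        by_cases hzi : (z i : ℝ) = 0
        · have := hwz0 i hzi
          show w (z i) - w (z i) * w (z i) = 0
          rw [this]; ring
        · have := hwz1 i hzi
          show w (z i) - w (z i) * w (z i) = 0
          rw [this]; ring
      rw [this, Complex.ofReal_zero]
    rw [h2, Matrix.diagonal_zero, mul_zero, zero_mul]
  have hdzero : ∀ j, d j = 0 := eq_zero_of_sum_star_mul_self d hdsum
  have hcczero : ∀ j : Fin k, α (elt k hs.le (c * c) hcc0 j j) = 0 := fun j => by
    rw [← hdj j, hdzero j, star_zero, zero_mul]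
  -- the projections q j
  set q : Fin k → Mat r := fun j => α (elt k hs.le w hw0 j j) with hq
  have hwdec : w = w * w + (w - w * w) := by ring
  have hqsplit : ∀ j, q j = α (elt k hs.le (w * w) hww0 j j) := by
    intro j
    rw [hq]
    show α (elt k hs.le w hw0 j j) = _
    rw [elt_eq_of_eq k hs.le hwdec hw0 j j,
      elt_add k hs.le (w * w) (w - w * w) hww0 hsub0 (hwdec ▸ hw0) j j, map_add α]
    have : elt k hs.le (w - w * w) hsub0 j j = elt k hs.le (c * c) hcc0 j j :=
      (elt_eq_of_eq k hs.le hcc.symm hsub0 j j)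
    rw [this, hcczero j, add_zero]
  have hqidem : ∀ j, q j * q j = q j := by
    intro j
    have : q j * q j = α (elt k hs.le (w * w) hww0 j j) := by
      rw [hq]
      show α (elt k hs.le w hw0 j j) * α (elt k hs.le w hw0 j j) = _
      rw [← map_mul α, elt_mul k hs.le w w hw0 hw0 hww0 j j j]
    rw [this, ← hqsplit j]
  have hqherm : ∀ j, (q j).IsHermitian := by
    intro j
    show (q j)ᴴ = q j
    rw [← Matrix.star_eq_conjTranspose, hq]
    show star (α (elt k hs.le w hw0 j j)) = α (elt k hs.le w hw0 j j)
    rw [← map_star α, elt_star]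
  have hqtrace : ∀ j, (q j).trace = (q i0).trace := by
    intro j
    have h1 : ∀ (a b : Fin k), α (elt k hs.le w hw0 a b)
        = α (elt k hs.le gq (by rw [hgg] at *; exact hgq0) a i0)
          * α (elt k hs.le gq (by rw [hgg] at *; exact hgq0) i0 b) := by
      intro a b
      rw [← map_mul α, elt_mul k hs.le gq gq _ _ hgg0 a i0 b,
        elt_eq_of_eq k hs.le hgg hgg0 a b]
    rw [hq]
    show (α (elt k hs.le w hw0 j j)).trace = (α (elt k hs.le w hw0 i0 i0)).trace
    rw [h1 j j, Matrix.trace_mul_comm, ← map_mul α,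
      elt_mul k hs.le gq gq _ _ hgg0 i0 j i0,
      elt_eq_of_eq k hs.le hgg hgg0 i0 i0]
  -- trace computation
  set m : ℕ := (Finset.univ.filter fun i => ((z i : ℝ) = 0)).card with hm
  set mne : ℕ := (Finset.univ.filter fun i => ¬((z i : ℝ) = 0)).card with hmne
  have hsumtrace : (∑ j : Fin k, q j).trace = (mne : ℂ) := by
    have h1 : (∑ j : Fin k, q j) = u * Matrix.diagonal (fun i => ((w (z i) : ℝ) : ℂ)) * star u := by
      rw [hq, ← map_sum α, elt_sum, hrep]
      rfl
    rw [h1, Matrix.trace_mul_cycle, (Unitary.mem_iff.mp hu).1, one_mul, Matrix.trace_diagonal,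
      hmne, ← Finset.sum_boole]
    refine Finset.sum_congr rfl fun i _ => ?_
    by_cases hzi : (z i : ℝ) = 0
    · rw [hwz0 i hzi, if_neg (by simpa using hzi), Complex.ofReal_zero]
    · rw [hwz1 i hzi, if_pos hzi, Complex.ofReal_one]
  obtain ⟨n, hn⟩ := trace_nat_of_proj (hqherm i0) (hqidem i0)
  have hktrace : (∑ j : Fin k, q j).trace = (k : ℂ) * (n : ℂ) := by
    rw [Matrix.trace_sum]
    rw [Finset.sum_congr rfl fun j _ => (hqtrace j).trans hn]
    rw [Finset.sum_const, Finset.card_univ, Fintype.card_fin, nsmul_eq_mul]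
  have hmne_eq : mne = k * n := by
    have : (mne : ℂ) = ((k * n : ℕ) : ℂ) := by
      rw [← hsumtrace, hktrace]
      push_cast
      ring
    exact_mod_cast this
  have hsplit : m + mne = r := by
    rw [hm, hmne]
    rw [Finset.card_filter_add_card_filter_not]
    simp
  show m ≡ r [MOD k]
  have hr : r = m + k * n := by omega
  show m % k = r % k
  rw [hr, Nat.add_mul_mod_self_left]

end Stmt3Aux

/-- For a unital homomorphism `α : I_k|_{[0,s₀]} → M_r(ℂ)`, the multiplicity of `0` in the
spectrum of `α̃ = α ∘ ι : C[0,s₀] → M_r(ℂ)` is congruent to `r` modulo `k`. -/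
theorem stmt3 (k r : ℕ) (hk : 1 ≤ k) (s₀ : ℝ) (hs : 0 < s₀) (hs1 : s₀ ≤ 1)
    (α : ↥(dimDropZero k hs.le) →⋆ₙₐ[ℂ] Mat r) (hα : α 1 = 1) :
    (∃ z : Fin r → ↥(Set.Icc (0:ℝ) s₀),
        DiagRep (fun g => α (scalarEmbZero k hs.le g)) z) ∧
    ∀ z : Fin r → ↥(Set.Icc (0:ℝ) s₀),
      DiagRep (fun g => α (scalarEmbZero k hs.le g)) z →
      (Finset.univ.filter fun i => ((z i : ℝ) = 0)).card ≡ r [MOD k] := by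
  constructor
  · exact exists_diagRep k r hs.le α hα
  · intro z hDR
    obtain ⟨u, hu, hrep⟩ := hDR
    exact congr_of_diagRep k r hk hs α z u hu hrep
end
end

section
/- For every integer k ≥ 2 there exists a unital homomorphism α: M_k(ℂ) → M_k(C(S¹)) which cannot be extended over the disk; that is, there is no unital homomorphism ᾱ: M_k(ℂ) → M_k(C(D)), where D is the closed unit disk with boundary S¹, such that π ∘ ᾱ = α, where π: M_k(C(D)) → M_k(C(S¹)) is the restriction map to the boundary. -/
noncomputable section

open scoped Matrix.Norms.L2Operator Kronecker
open Matrix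

namespace Aux8

open Complex

abbrev I01 := ↥(Set.Icc (0:ℝ) 1)
abbrev DD := ↥(Metric.closedBall (0:ℂ) 1)
abbrev Sp := ↥(Metric.sphere (0:ℂ) 1)

/-! ### Elementary algebra lemmas -/

lemma step_intertwine {R : Type*} [Ring R] {P Q : R} (hP : P*P = P) (hQ : Q*Q = Q) :
    (Q*P + (1-Q)*(1-P)) * P = Q * (Q*P + (1-Q)*(1-P)) := by
  have hP' : ∀ x : R, P*(P*x) = P*x := fun x => by rw [← mul_assoc, hP]
  have hQ' : ∀ x : R, Q*(Q*x) = Q*x := fun x => by rw [← mul_assoc, hQ]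
  simp only [mul_add, add_mul, mul_sub, sub_mul, mul_one, one_mul, mul_assoc, hP, hQ, hP', hQ']
  abel

lemma step_star_mul {R : Type*} [Ring R] [StarRing R] {P Q : R} (hP : P*P = P) (hQ : Q*Q = Q)
    (hPs : star P = P) (hQs : star Q = Q) :
    star (Q*P + (1-Q)*(1-P)) * (Q*P + (1-Q)*(1-P)) = 1 - (P-Q)*(P-Q) := by
  have hs : star (Q*P + (1-Q)*(1-P)) = P*Q + (1-P)*(1-Q) := by
    simp [StarMul.star_mul, hPs, hQs, star_sub, star_one]
  rw [hs]
  have hP' : ∀ x : R, P*(P*x) = P*x := fun x => by rw [← mul_assoc, hP]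
  have hQ' : ∀ x : R, Q*(Q*x) = Q*x := fun x => by rw [← mul_assoc, hQ]
  simp only [mul_add, add_mul, mul_sub, sub_mul, mul_one, one_mul, mul_assoc, hP, hQ, hP', hQ']
  abel

lemma unit_cancel {k : ℕ} {A : Mat k} (hA : IsUnit A) {v : Fin k → ℂ}
    (hv : A *ᵥ v = 0) : v = 0 := by
  obtain ⟨u, rfl⟩ := hA
  have h2 : (u⁻¹).val *ᵥ ((u.val) *ᵥ v) = 0 := by rw [hv, Matrix.mulVec_zero]
  rw [Matrix.mulVec_mulVec, u.inv_mul, Matrix.one_mulVec] at h2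
  exact h2

lemma step_inj {k : ℕ} {P Q : Mat k} (hP : P*P = P) (hQ : Q*Q = Q)
    (hPs : star P = P) (hQs : star Q = Q) (hn : ‖P - Q‖ < 1)
    {v : Fin k → ℂ} (hv : (Q*P + (1-Q)*(1-P)) *ᵥ v = 0) : v = 0 := by
  have hnorm : ‖(P-Q)*(P-Q)‖ < 1 := by
    calc ‖(P-Q)*(P-Q)‖ ≤ ‖P-Q‖ * ‖P-Q‖ := norm_mul_le _ _
    _ < 1 * 1 := mul_lt_mul'' hn hn (norm_nonneg _) (norm_nonneg _)
    _ = 1 := one_mul 1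
  have hu : IsUnit (1 - (P-Q)*(P-Q)) := (Units.oneSub _ hnorm).isUnit
  have h2 : (1 - (P-Q)*(P-Q)) *ᵥ v = 0 := by
    rw [← step_star_mul hP hQ hPs hQs, ← Matrix.mulVec_mulVec, hv, Matrix.mulVec_zero]
  exact unit_cancel hu h2

lemma stdBasis_mulVec {k : ℕ} (a b i : Fin k) (v : Fin k → ℂ) :
    (Matrix.single a b (1:ℂ) *ᵥ v) i = if a = i then v b else 0 := by
  simp [Matrix.mulVec, dotProduct, Matrix.single, ite_and,
    Finset.sum_ite_eq]

lemma stdBasis_star {k : ℕ} (a b : Fin k) :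
    star (Matrix.single a b (1:ℂ)) = Matrix.single b a 1 := by
  show (Matrix.single a b (1:ℂ))ᴴ = _
  ext i j
  simp [Matrix.conjTranspose_apply, Matrix.single, and_comm]

lemma sum_stdBasis {k : ℕ} : (∑ i : Fin k, Matrix.single i i (1:ℂ)) = 1 := by
  ext i j
  rw [Matrix.sum_apply]
  by_cases h : i = j
  · subst h
    rw [Matrix.one_apply_eq]
    rw [Finset.sum_eq_single i]
    · simp [Matrix.single]
    · intro l _ hl; simp [Matrix.single, hl]
    · intro h; simp at h
  · rw [Matrix.one_apply_ne h]
    apply Finset.sum_eq_zero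
    intro l _
    simp only [Matrix.single, Matrix.of_apply]
    split_ifs with hc
    · exact absurd (hc.1.symm.trans hc.2) h
    · rfl

lemma matrix_ne_zero_mulVec {k : ℕ} {M : Mat k} (h : M ≠ 0) : ∃ v, M *ᵥ v ≠ 0 := by
  by_contra hc
  push_neg at hc
  apply h
  ext i j
  have := congrFun (hc (Pi.single j 1)) i
  simpa [Matrix.mulVec_single] using this

lemma exp_eq_exp_real {A B : ℝ} (h : Complex.exp (A * I) = Complex.exp (B * I)) :
    ∃ n : ℤ, A = B + n * (2*Real.pi) := by
  rw [Complex.exp_eq_exp_iff_exists_int] at h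
  obtain ⟨n, hn⟩ := h
  refine ⟨n, ?_⟩
  have h2 : (A : ℂ) * I = ((B + n * (2*Real.pi) : ℝ) : ℂ) * I := by
    rw [hn]; push_cast; ring
  have h3 : (A : ℂ) = ((B + n * (2*Real.pi) : ℝ) : ℂ) :=
    mul_right_cancel₀ Complex.I_ne_zero h2
  exact_mod_cast h3

lemma conj_mul_self_one {w : ℂ} (h : star w * w = 1) : ‖w‖ = 1 := by
  rw [RCLike.star_def] at h
  have h2 : (Complex.normSq w : ℂ) = 1 := by rw [Complex.normSq_eq_conj_mul_self]; exact h
  have h3 : Complex.normSq w = 1 := by exact_mod_cast h2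
  rw [Complex.norm_def, h3, Real.sqrt_one]

/-! ### Lifting of circle-valued maps along the cone parameter -/

lemma step_slit {a b : ℂ} (ha : ‖a‖ = 1) (hb : ‖b‖ = 1)
    (hd : dist a b < 1) : a / b ∈ Complex.slitPlane ∧ ‖a / b‖ = 1 := by
  have habs : ‖a / b‖ = 1 := by rw [norm_div, ha, hb, div_one]
  refine ⟨?_, habs⟩
  rw [Complex.mem_slitPlane_iff]
  by_contra h
  push_neg at h
  obtain ⟨h1, h2⟩ := h
  have hb0 : b ≠ 0 := by
    intro h; rw [h, norm_zero] at hb; norm_num at hb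
  have hreal : a / b = ((a/b).re : ℂ) := by
    apply Complex.ext <;> simp [h2]
  have habs' : |(a/b).re| = 1 := by
    have := habs
    rw [hreal] at this
    simpa using this
  have hre : (a/b).re = -1 := by
    rcases abs_cases ((a/b).re) with ⟨h3, _⟩ | ⟨h3, _⟩
    · nlinarith [habs']
    · linarith [habs']
  have hab : a = -b := by
    have : a / b = -1 := by rw [hreal, hre]; norm_num
    field_simp at this
    linear_combination this
  rw [hab] at hd
  have : dist (-b) b = 2 := by
    rw [Complex.dist_eq]
    have : -b - b = -(2*b) := by ring
    rw [this, norm_neg, norm_mul, hb, mul_one, Complex.norm_two]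
  rw [this] at hd; norm_num at hd

def coneG {X : Type*} (θ₀ : ℝ) (F : ℕ → X → ℝ) : ℕ → X → ℝ
  | 0 => fun _ => θ₀
  | (j+1) => fun x => coneG θ₀ F j x + F j x

lemma cone_lift {X : Type*} [MetricSpace X] [CompactSpace X]
    (h : C(X × I01, ℂ)) (hn : ∀ p, ‖h p‖ = 1)
    (θ₀ : ℝ) (h0 : ∀ x, h (x, ⟨0, by norm_num⟩) = Complex.exp (θ₀ * Complex.I)) :
    ∃ G : X → ℝ, Continuous G ∧
      ∀ x, h (x, ⟨1, by norm_num⟩) = Complex.exp (G x * Complex.I) := by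
  haveI : CompactSpace I01 := isCompact_iff_compactSpace.mp isCompact_Icc
  have huc := CompactSpace.uniformContinuous_of_continuous h.continuous
  obtain ⟨δ, hδ, hd⟩ := Metric.uniformContinuous_iff.mp huc 1 one_pos
  obtain ⟨N, hN⟩ := exists_nat_one_div_lt hδ
  set M : ℕ := N + 1 with hM
  have hM0 : (0:ℝ) < M := by positivity
  have hMδ : 1 / (M:ℝ) < δ := by exact_mod_cast hN
  have tmem : ∀ j : ℕ, min ((j:ℝ) / M) 1 ∈ Set.Icc (0:ℝ) 1 :=
    fun j => ⟨le_min (by positivity) zero_le_one, min_le_right _ _⟩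
  set tj : ℕ → I01 := fun j => ⟨min ((j:ℝ) / M) 1, tmem j⟩ with htj
  have htjle : ∀ j : ℕ, j ≤ M → (tj j : ℝ) = (j:ℝ)/M := by
    intro j hj
    simp only [htj]
    exact min_eq_left (by
      rw [div_le_one hM0]; exact_mod_cast hj)
  have hstep : ∀ (x : X) (j : ℕ), j + 1 ≤ M →
      dist (h (x, tj (j+1))) (h (x, tj j)) < 1 := by
    intro x j hj
    apply hd
    rw [Prod.dist_eq]
    apply max_lt
    · simpa [dist_self] using hδ
    · have heq : dist (tj (j+1)) (tj j) = 1 / M := by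
        rw [Subtype.dist_eq, Real.dist_eq, htjle _ hj, htjle _ (le_trans (Nat.le_succ j) hj)]
        have h1 : ((j+1:ℕ):ℝ)/M - (j:ℝ)/M = 1/M := by push_cast; field_simp; ring
        rw [h1, abs_of_pos (by positivity)]
      calc dist ((x, tj (j+1)).2) ((x, tj j).2) = 1/(M:ℝ) := heq
        _ < δ := hMδ
  set g : ℕ → X → ℝ := coneG θ₀ (fun j x => Complex.arg (h (x, tj (j+1)) / h (x, tj j))) with hg
  have key : ∀ m : ℕ, m ≤ M → Continuous (g m) ∧
      ∀ x, h (x, tj m) = Complex.exp ((g m x) * Complex.I) := by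
    intro m
    induction m with
    | zero =>
      intro _
      constructor
      · exact continuous_const
      · intro x
        have ht0 : tj 0 = ⟨0, by norm_num⟩ := by
          apply Subtype.ext; simp [htj]
        have hg0 : g 0 x = θ₀ := by simp [hg, coneG]
        rw [ht0, h0, hg0]
    | succ j ih =>
      intro hj
      obtain ⟨ihc, ihe⟩ := ih (le_trans (Nat.le_succ j) hj)
      have hslit : ∀ x : X, (h (x, tj (j+1)) / h (x, tj j)) ∈ Complex.slitPlane ∧
          ‖h (x, tj (j+1)) / h (x, tj j)‖ = 1 :=
        fun x => step_slit (hn _) (hn _) (hstep x j hj)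
      have hcontr : Continuous fun x => h (x, tj (j+1)) / h (x, tj j) := by
        apply Continuous.div₀
        · exact h.continuous.comp (continuous_id.prodMk continuous_const)
        · exact h.continuous.comp (continuous_id.prodMk continuous_const)
        · intro x
          intro hzero
          have := hn (x, tj j)
          rw [hzero] at this; norm_num at this
      constructor
      · show Continuous fun x => g j x + Complex.arg (h (x, tj (j+1)) / h (x, tj j))
        apply ihc.add
        rw [continuous_iff_continuousAt]
        intro x
        exact ContinuousAt.comp (g := Complex.arg)
          (f := fun y => h (y, tj (j+1)) / h (y, tj j))
          (Complex.continuousAt_arg (hslit x).1) hcontr.continuousAt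
      · intro x
        have hgs : g (j+1) x = g j x + Complex.arg (h (x, tj (j+1)) / h (x, tj j)) := by
          simp only [hg, coneG]
        rw [hgs, Complex.ofReal_add, add_mul, Complex.exp_add, ← ihe x]
        have habs1 := (hslit x).2
        have hx : Complex.exp ((Complex.arg (h (x, tj (j+1)) / h (x, tj j)) : ℂ) * Complex.I)
            = h (x, tj (j+1)) / h (x, tj j) := by
          have := Complex.norm_mul_exp_arg_mul_I (h (x, tj (j+1)) / h (x, tj j))
          rw [habs1] at this
          simpa using this
        rw [hx]
        have hne : h (x, tj j) ≠ 0 := by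
          intro hzero
          have := hn (x, tj j); rw [hzero] at this; norm_num at this
        field_simp
  obtain ⟨hc, he⟩ := key M le_rfl
  refine ⟨g M, hc, fun x => ?_⟩
  have : tj M = ⟨1, by norm_num⟩ := by
    apply Subtype.ext
    simp only [htj]
    rw [div_self (ne_of_gt hM0)]
    simp
  rw [← this]
  exact he x

lemma int_valued_const {f : I01 → ℝ} (hf : Continuous f)
    (hint : ∀ θ, ∃ n : ℤ, f θ = n) :
    f ⟨0, by norm_num⟩ = f ⟨1, by norm_num⟩ := by
  haveI : PreconnectedSpace I01 := Subtype.preconnectedSpace isPreconnected_Icc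
  set a : I01 := ⟨0, by norm_num⟩
  set b : I01 := ⟨1, by norm_num⟩
  by_contra hne
  obtain ⟨m, hm⟩ := hint a
  obtain ⟨m', hm'⟩ := hint b
  have key : ∀ (x y : I01) (p q : ℤ), f x = p → f y = q → p < q → False := by
    intro x y p q hp hq hlt
    have hmem : ((p:ℝ) + 1/2) ∈ Set.Icc (f x) (f y) := by
      constructor
      · rw [hp]; linarith
      · rw [hq]
        have : (p:ℝ) + 1 ≤ q := by exact_mod_cast hlt
        linarith
    obtain ⟨θ, hθ⟩ := intermediate_value_univ x y hf hmem
    obtain ⟨n, hn⟩ := hint θ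
    rw [hn] at hθ
    have h2 : (2*n : ℝ) = 2*p + 1 := by linarith [hθ]
    have h3 : (2*n : ℤ) = 2*p + 1 := by exact_mod_cast h2
    omega
  have hmm : m ≠ m' := by
    intro h; apply hne; rw [hm, hm', h]
  rcases lt_or_gt_of_ne hmm with h | h
  · exact key a b m m' hm hm' h
  · exact key b a m' m hm' hm h

/-! ### Existence of a continuous unit section of a projection field over the disk -/

lemma memD (w : DD × I01) : ((w.2.1 : ℝ) : ℂ) * w.1.1 ∈ Metric.closedBall (0:ℂ) 1 := by
  rw [mem_closedBall_zero_iff]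
  have h1 : ‖(w.1.1 : ℂ)‖ ≤ 1 := mem_closedBall_zero_iff.mp w.1.2
  have h2 : |w.2.1| ≤ 1 := abs_le.mpr ⟨by linarith [w.2.2.1], w.2.2.2⟩
  calc ‖((w.2.1:ℝ) : ℂ) * w.1.1‖ = ‖((w.2.1:ℝ) : ℂ)‖ * ‖w.1.1‖ := norm_mul _ _
    _ ≤ 1 * 1 := by
        apply mul_le_mul _ h1 (norm_nonneg _) zero_le_one
        rwa [Complex.norm_real, Real.norm_eq_abs]
    _ = 1 := one_mul 1

noncomputable def chainV {k : ℕ} (ξ0 : Fin k → ℂ) (A : ℕ → DD → Mat k) : ℕ → DD → (Fin k → ℂ)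
  | 0 => fun _ => ξ0
  | (j+1) => fun z => A j z *ᵥ chainV ξ0 A j z

set_option maxHeartbeats 1000000 in
lemma exists_section {k : ℕ} (p : C(DD, Mat k))
    (hidem : ∀ z, p z * p z = p z) (hherm : ∀ z, star (p z) = p z)
    (ξ0 : Fin k → ℂ)
    (hc : p ⟨0, by simp [mem_closedBall_zero_iff]⟩ *ᵥ ξ0 = ξ0) (hξ0 : ξ0 ≠ 0) :
    ∃ ξ : DD → Fin k → ℂ, Continuous ξ ∧ ∀ z, p z *ᵥ ξ z = ξ z ∧ ξ z ≠ 0 := by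
  haveI : CompactSpace I01 := isCompact_iff_compactSpace.mp isCompact_Icc
  haveI : CompactSpace DD := isCompact_iff_compactSpace.mp (isCompact_closedBall _ _)
  set q : DD × I01 → Mat k := fun w => p ⟨(w.2.1 : ℂ) * w.1.1, memD w⟩ with hq
  have hqc : Continuous q := by
    apply p.continuous.comp
    apply Continuous.subtype_mk
    exact (Complex.continuous_ofReal.comp (continuous_subtype_val.comp continuous_snd)).mul
      (continuous_subtype_val.comp continuous_fst)
  have huc : UniformContinuous q := CompactSpace.uniformContinuous_of_continuous hqc
  obtain ⟨δ, hδ, hd⟩ := Metric.uniformContinuous_iff.mp huc 1 one_pos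
  obtain ⟨N, hN⟩ := exists_nat_one_div_lt hδ
  set M : ℕ := N + 1 with hM
  have hM0 : (0:ℝ) < M := by positivity
  have hMδ : 1 / (M:ℝ) < δ := by exact_mod_cast hN
  have tmem : ∀ j : ℕ, min ((j:ℝ) / M) 1 ∈ Set.Icc (0:ℝ) 1 :=
    fun j => ⟨le_min (by positivity) zero_le_one, min_le_right _ _⟩
  set tj : ℕ → I01 := fun j => ⟨min ((j:ℝ) / M) 1, tmem j⟩ with htj
  have htjle : ∀ j : ℕ, j ≤ M → (tj j : ℝ) = (j:ℝ)/M := by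
    intro j hj
    simp only [htj]
    exact min_eq_left (by rw [div_le_one hM0]; exact_mod_cast hj)
  have hstep : ∀ (z : DD) (j : ℕ), j + 1 ≤ M →
      ‖q (z, tj (j+1)) - q (z, tj j)‖ < 1 := by
    intro z j hj
    rw [← dist_eq_norm]
    apply hd
    rw [Prod.dist_eq]
    apply max_lt
    · simpa [dist_self] using hδ
    · have heq : dist (tj (j+1)) (tj j) = 1 / M := by
        rw [Subtype.dist_eq, Real.dist_eq, htjle _ hj, htjle _ (le_trans (Nat.le_succ j) hj)]
        have h1 : ((j+1:ℕ):ℝ)/M - (j:ℝ)/M = 1/M := by push_cast; field_simp; ring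
        rw [h1, abs_of_pos (by positivity)]
      calc dist ((z, tj (j+1)).2) ((z, tj j).2) = 1/(M:ℝ) := heq
        _ < δ := hMδ
  have hqidem : ∀ w, q w * q w = q w := fun w => hidem _
  have hqherm : ∀ w, star (q w) = q w := fun w => hherm _
  have hq0 : ∀ z : DD, q (z, tj 0) = p ⟨0, by simp [mem_closedBall_zero_iff]⟩ := by
    intro z
    show p ⟨((tj 0 : ℝ) : ℂ) * z.1, _⟩ = p _
    congr 1
    apply Subtype.ext
    have : (tj 0 : ℝ) = 0 := by simp [htj]
    simp [this]
  have hqM : ∀ z : DD, q (z, tj M) = p z := by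
    intro z
    have h1 : (tj M : ℝ) = 1 := by rw [htjle M le_rfl, div_self (ne_of_gt hM0)]
    show p ⟨((tj M : ℝ) : ℂ) * z.1, _⟩ = p z
    congr 1
    apply Subtype.ext
    simp [h1]
  set A : ℕ → DD → Mat k := fun j z =>
    q (z, tj (j+1)) * q (z, tj j) + (1 - q (z, tj (j+1))) * (1 - q (z, tj j)) with hA
  set v : ℕ → DD → (Fin k → ℂ) := chainV ξ0 A with hv
  have key : ∀ m : ℕ, m ≤ M → Continuous (v m) ∧
      ∀ z, q (z, tj m) *ᵥ v m z = v m z ∧ v m z ≠ 0 := by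
    intro m
    induction m with
    | zero =>
      intro _
      refine ⟨continuous_const, fun z => ⟨?_, hξ0⟩⟩
      show q (z, tj 0) *ᵥ ξ0 = ξ0
      rw [hq0 z]; exact hc
    | succ j ih =>
      intro hj
      obtain ⟨ihc, ihp⟩ := ih (le_trans (Nat.le_succ j) hj)
      have hAc : Continuous (fun z => A j z) := by
        have h1 : Continuous fun z : DD => q (z, tj (j+1)) :=
          hqc.comp (continuous_id.prodMk continuous_const)
        have h2 : Continuous fun z : DD => q (z, tj j) :=
          hqc.comp (continuous_id.prodMk continuous_const)
        exact (h1.matrix_mul h2).add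
          ((continuous_const.sub h1).matrix_mul (continuous_const.sub h2))
      have hvs : ∀ z, v (j+1) z = A j z *ᵥ v j z := fun z => by simp only [hv, chainV]
      refine ⟨?_, fun z => ⟨?_, ?_⟩⟩
      · show Continuous fun z => v (j+1) z
        simp only [hvs]
        exact hAc.matrix_mulVec ihc
      · rw [hvs]
        have h1 := (ihp z).1
        set P := q (z, tj j)
        set Q := q (z, tj (j+1))
        have hint := step_intertwine (hqidem (z, tj j)) (hqidem (z, tj (j+1)))
        calc Q *ᵥ ((Q*P + (1-Q)*(1-P)) *ᵥ v j z)
            = (Q * (Q*P + (1-Q)*(1-P))) *ᵥ v j z := Matrix.mulVec_mulVec _ _ _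
          _ = ((Q*P + (1-Q)*(1-P)) * P) *ᵥ v j z := by rw [hint]
          _ = (Q*P + (1-Q)*(1-P)) *ᵥ (P *ᵥ v j z) := (Matrix.mulVec_mulVec _ _ _).symm
          _ = (Q*P + (1-Q)*(1-P)) *ᵥ v j z := by rw [h1]
      · rw [hvs]
        intro hzero
        rw [hA] at hzero
        apply (ihp z).2
        exact step_inj (hqidem (z, tj j)) (hqidem (z, tj (j+1)))
          (hqherm (z, tj j)) (hqherm (z, tj (j+1)))
          (by rw [norm_sub_rev]; exact hstep z j hj) hzero
  obtain ⟨hcont, hprop⟩ := key M le_rfl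
  refine ⟨v M, hcont, fun z => ⟨?_, (hprop z).2⟩⟩
  have := (hprop z).1
  rwa [hqM z] at this

/-! ### The boundary homomorphism -/

def dvec (k : ℕ) (z : ℂ) : Fin k → ℂ := fun i => if (i : ℕ) = 0 then z else 1

def uMat (k : ℕ) (z : ℂ) : Mat k := Matrix.diagonal (dvec k z)

lemma uMat_mul_conj (k : ℕ) (z : ℂ) (hz : ‖z‖ = 1) :
    uMat k z * (uMat k z)ᴴ = 1 ∧ (uMat k z)ᴴ * uMat k z = 1 := by
  have h : ∀ i : Fin k, dvec k z i * star (dvec k z i) = 1 := by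
    intro i
    simp only [dvec]
    split
    · rw [RCLike.star_def, Complex.mul_conj]
      norm_cast
      rw [Complex.normSq_eq_norm_sq, hz]; norm_num
    · simp
  have h' : ∀ i : Fin k, star (dvec k z i) * dvec k z i = 1 := by
    intro i; rw [mul_comm]; exact h i
  constructor <;>
  · rw [uMat, Matrix.diagonal_conjTranspose, Matrix.diagonal_mul_diagonal]
    ext i j
    by_cases hij : i = j
    · subst hij
      simp only [Matrix.diagonal_apply_eq, Pi.star_apply, Matrix.one_apply_eq]
      first
      | exact h i
      | exact h' i
    · rw [Matrix.diagonal_apply_ne _ hij, Matrix.one_apply_ne hij]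

lemma absSp (z : Sp) : ‖(z : ℂ)‖ = 1 := by
  have := z.2
  rw [mem_sphere_zero_iff_norm] at this
  exact this

lemma dvec_cont (k : ℕ) : Continuous fun z : Sp => dvec k z := by
  apply continuous_pi
  intro i
  by_cases h : (i:ℕ) = 0
  · simpa [dvec, h] using continuous_subtype_val
  · simp only [dvec, h, if_false]
    exact continuous_const

noncomputable def conjHom (k : ℕ) : Mat k →⋆ₐ[ℂ] C(Sp, Mat k) where
  toFun a := ⟨fun z => uMat k z * a * (uMat k z)ᴴ, by
    apply Continuous.matrix_mul
    apply Continuous.matrix_mul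
    · exact Continuous.matrix_diagonal (dvec_cont k)
    · exact continuous_const
    · exact Continuous.matrix_conjTranspose (Continuous.matrix_diagonal (dvec_cont k))⟩
  map_one' := by
    refine ContinuousMap.ext fun z => ?_
    show uMat k z * 1 * (uMat k z)ᴴ = (1 : Mat k)
    rw [mul_one]
    exact (uMat_mul_conj k z (absSp z)).1
  map_mul' a b := by
    refine ContinuousMap.ext fun z => ?_
    show uMat k z * (a * b) * (uMat k z)ᴴ
      = (uMat k z * a * (uMat k z)ᴴ) * (uMat k z * b * (uMat k z)ᴴ)
    have h := (uMat_mul_conj k z (absSp z)).2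
    calc uMat k z * (a * b) * (uMat k z)ᴴ
        = uMat k z * a * ((uMat k z)ᴴ * uMat k z) * b * (uMat k z)ᴴ := by
          rw [h]; noncomm_ring
      _ = (uMat k z * a * (uMat k z)ᴴ) * (uMat k z * b * (uMat k z)ᴴ) := by noncomm_ring
  map_zero' := by
    refine ContinuousMap.ext fun z => ?_
    show uMat k z * 0 * (uMat k z)ᴴ = (0 : Mat k)
    simp
  map_add' a b := by
    refine ContinuousMap.ext fun z => ?_
    show uMat k z * (a + b) * (uMat k z)ᴴ
      = uMat k z * a * (uMat k z)ᴴ + uMat k z * b * (uMat k z)ᴴ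
    noncomm_ring
  commutes' r := by
    refine ContinuousMap.ext fun z => ?_
    show uMat k z * (algebraMap ℂ (Mat k) r) * (uMat k z)ᴴ
      = (algebraMap ℂ C(Sp, Mat k) r) z
    have h1 := (uMat_mul_conj k z (absSp z)).1
    have h2 : (algebraMap ℂ C(Sp, Mat k) r) z = algebraMap ℂ (Mat k) r := rfl
    rw [h2, Algebra.algebraMap_eq_smul_one, mul_smul_comm, smul_mul_assoc, mul_one, h1]
  map_star' a := by
    refine ContinuousMap.ext fun z => ?_
    show uMat k z * (star a) * (uMat k z)ᴴ = star (uMat k z * a * (uMat k z)ᴴ)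
    show uMat k z * aᴴ * (uMat k z)ᴴ = (uMat k z * a * (uMat k z)ᴴ)ᴴ
    rw [Matrix.conjTranspose_mul, Matrix.conjTranspose_mul, Matrix.conjTranspose_conjTranspose]
    noncomm_ring

lemma conjHom_apply (k : ℕ) (a : Mat k) (z : Sp) :
    conjHom k a z = uMat k z * a * (uMat k z)ᴴ := rfl

lemma conj_stdBasis (k : ℕ) (z : Sp) (a b : Fin k) :
    conjHom k (Matrix.single a b 1) z
      = (dvec k z a * star (dvec k z b)) • Matrix.single a b 1 := by
  rw [conjHom_apply, uMat, Matrix.diagonal_conjTranspose]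
  ext i j
  rw [Matrix.mul_diagonal, Matrix.diagonal_mul, Matrix.smul_apply]
  simp only [Matrix.single, Matrix.of_apply, Pi.star_apply, smul_eq_mul]
  split_ifs with hcond
  · obtain ⟨rfl, rfl⟩ := hcond; ring
  · ring

end Aux8

set_option maxHeartbeats 4000000 in
/-- For every `k ≥ 2` there is a unital homomorphism `α : M_k(ℂ) → M_k(C(S¹))` which admits
no unital extension `ᾱ : M_k(ℂ) → M_k(C(D))` over the closed unit disk `D` with
`π ∘ ᾱ = α`, where `π` is restriction to the boundary circle. -/
theorem stmt8 (k : ℕ) (hk : 2 ≤ k) :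
    ∃ α : Mat k →⋆ₐ[ℂ] C(↥(Metric.sphere (0:ℂ) 1), Mat k),
      ∀ ᾱ : Mat k →⋆ₐ[ℂ] C(↥(Metric.closedBall (0:ℂ) 1), Mat k),
        ¬ (∀ a : Mat k, (ᾱ a).comp (setIncl Metric.sphere_subset_closedBall) = α a) := by
  classical
  haveI : CompactSpace Aux8.I01 := isCompact_iff_compactSpace.mp isCompact_Icc
  refine ⟨Aux8.conjHom k, fun ᾱ hext => ?_⟩
  set i0 : Fin k := ⟨0, by omega⟩ with hi0
  set E : Fin k → Fin k → Mat k := fun i j => Matrix.single i j 1 with hE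
  have hEsame : ∀ a b c : Fin k, E a b * E b c = E a c := by
    intro a b c
    simp only [hE]
    rw [Matrix.single_mul_single_same, one_mul]
  have hEne : ∀ (a b c d : Fin k), b ≠ c → E a b * E c d = 0 := by
    intro a b c d h
    simp only [hE]
    exact Matrix.single_mul_single_of_ne (h := h) ..
  -- pointwise homomorphism properties
  have hmulpt : ∀ (a b : Mat k) (z : Aux8.DD), ᾱ (a*b) z = ᾱ a z * ᾱ b z := by
    intro a b z; rw [_root_.map_mul]; rfl
  have hstarpt : ∀ (a : Mat k) (z : Aux8.DD), ᾱ (star a) z = star (ᾱ a z) := by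
    intro a z; rw [map_star]; rfl
  -- boundary values
  have hbd : ∀ (a : Mat k) (y : Aux8.Sp),
      ᾱ a (⟨y.1, Metric.sphere_subset_closedBall y.2⟩ : Aux8.DD) = Aux8.conjHom k a y := by
    intro a y
    have := ContinuousMap.congr_fun (hext a) y
    exact this
  set incl : Aux8.Sp → Aux8.DD := fun y => ⟨y.1, Metric.sphere_subset_closedBall y.2⟩ with hincl
  -- the projection field
  set p : C(Aux8.DD, Mat k) := ᾱ (E i0 i0) with hp
  have hidem : ∀ z, p z * p z = p z := by
    intro z
    rw [hp, ← hmulpt, hEsame]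
  have hherm : ∀ z, star (p z) = p z := by
    intro z
    rw [hp, ← hstarpt]
    congr 2
    simp only [hE]
    exact Aux8.stdBasis_star i0 i0
  -- nonvanishing at the center
  set c0 : Aux8.DD := ⟨0, by simp [mem_closedBall_zero_iff]⟩ with hc0
  have hp0 : p c0 ≠ 0 := by
    intro h0
    have hdiag : ∀ i : Fin k, ᾱ (E i i) c0 = 0 := by
      intro i
      have h1 : E i i = E i i0 * E i0 i0 * E i0 i := by
        rw [hEsame, hEsame]
      rw [h1, hmulpt, hmulpt]
      rw [← hp] at *
      rw [h0]
      rw [mul_zero, zero_mul]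
    have hsum : ᾱ 1 c0 = 0 := by
      have h1 : (1 : Mat k) = ∑ i : Fin k, E i i := by
        simp only [hE]; exact Aux8.sum_stdBasis.symm
      rw [h1, _root_.map_sum]
      rw [ContinuousMap.sum_apply]
      exact Finset.sum_eq_zero fun i _ => hdiag i
    rw [_root_.map_one] at hsum
    have h2 : (1 : Mat k) i0 i0 = (0 : Mat k) i0 i0 := by
      rw [show (1 : C(Aux8.DD, Mat k)) c0 = (1 : Mat k) from rfl] at hsum
      rw [hsum]
    rw [Matrix.one_apply_eq, Matrix.zero_apply] at h2
    exact one_ne_zero h2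
  obtain ⟨w0, hw0⟩ := Aux8.matrix_ne_zero_mulVec hp0
  set ξ0 : Fin k → ℂ := p c0 *ᵥ w0 with hξ0def
  have hcξ0 : p c0 *ᵥ ξ0 = ξ0 := by
    rw [hξ0def, Matrix.mulVec_mulVec, hidem]
  obtain ⟨ξr, hξrc, hξr⟩ := Aux8.exists_section p hidem hherm ξ0 hcξ0 hw0
  -- normalize
  set S : Aux8.DD → ℝ := fun z => ∑ i, Complex.normSq (ξr z i) with hS
  have hSpos : ∀ z, 0 < S z := by
    intro z
    apply Finset.sum_pos'
    · intro i _; exact Complex.normSq_nonneg _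
    · obtain ⟨i, hi⟩ := Function.ne_iff.mp (hξr z).2
      exact ⟨i, Finset.mem_univ i, by
        have := Complex.normSq_pos.mpr (by simpa using hi)
        exact this⟩
  have hScont : Continuous S := by
    apply continuous_finset_sum
    intro i _
    exact Complex.continuous_normSq.comp ((continuous_apply i).comp hξrc)
  set ξ : Aux8.DD → Fin k → ℂ := fun z => ((Real.sqrt (S z) : ℝ) : ℂ)⁻¹ • ξr z with hξdef
  have hξc : Continuous ξ := by
    refine Continuous.smul (f := fun z => ((Real.sqrt (S z) : ℝ) : ℂ)⁻¹) (g := ξr) ?_ ?_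
    · apply Continuous.inv₀
      · exact Complex.continuous_ofReal.comp (Real.continuous_sqrt.comp hScont)
      · intro z
        simp only [ne_eq, Complex.ofReal_eq_zero]
        exact ne_of_gt (Real.sqrt_pos.mpr (hSpos z))
    · exact hξrc
  have hpξ : ∀ z, p z *ᵥ ξ z = ξ z := by
    intro z
    rw [hξdef]
    show p z *ᵥ (_ • ξr z) = _
    rw [Matrix.mulVec_smul, (hξr z).1]
  have hip : ∀ z, star (ξ z) ⬝ᵥ ξ z = 1 := by
    intro z
    have hs := hSpos z
    rw [hξdef]
    show star (_ • ξr z) ⬝ᵥ (_ • ξr z) = 1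
    rw [star_smul, smul_dotProduct, dotProduct_smul]
    have hvv : star (ξr z) ⬝ᵥ ξr z = ((S z : ℝ) : ℂ) := by
      rw [dotProduct, hS]
      push_cast
      apply Finset.sum_congr rfl
      intro i _
      rw [Pi.star_apply, RCLike.star_def, ← Complex.normSq_eq_conj_mul_self]
    rw [hvv]
    rw [star_inv₀, Complex.star_def, Complex.conj_ofReal]
    rw [smul_eq_mul, smul_eq_mul, ← mul_assoc, ← mul_inv]
    rw [show ((Real.sqrt (S z) : ℝ) : ℂ) * ((Real.sqrt (S z) : ℝ) : ℂ)
        = ((Real.sqrt (S z) * Real.sqrt (S z) : ℝ) : ℂ) by push_cast; ring]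
    rw [Real.mul_self_sqrt hs.le]
    exact inv_mul_cancel₀ (by exact_mod_cast ne_of_gt hs)
  -- the unitary-valued map
  set W : Aux8.DD → Mat k := fun z => Matrix.of (fun i j => (ᾱ (E j i0) z *ᵥ ξ z) i) with hW
  have hWc : Continuous W := by
    apply continuous_matrix
    intro i j
    exact (continuous_apply i).comp ((ᾱ (E j i0)).continuous.matrix_mulVec hξc)
  have hWunit : ∀ z, (W z)ᴴ * W z = 1 := by
    intro z
    ext i j
    rw [Matrix.mul_apply]
    have hterm : ∀ l, (W z)ᴴ i l * W z l j
        = star ((ᾱ (E i i0) z *ᵥ ξ z) l) * (ᾱ (E j i0) z *ᵥ ξ z) l := by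
      intro l
      rw [Matrix.conjTranspose_apply]
      rfl
    rw [Finset.sum_congr rfl (fun l _ => hterm l)]
    have hdot : ∑ l, star ((ᾱ (E i i0) z *ᵥ ξ z) l) * (ᾱ (E j i0) z *ᵥ ξ z) l
        = star (ᾱ (E i i0) z *ᵥ ξ z) ⬝ᵥ (ᾱ (E j i0) z *ᵥ ξ z) := by
      rw [dotProduct]
      exact Finset.sum_congr rfl fun l _ => rfl
    rw [hdot, Matrix.star_mulVec, Matrix.dotProduct_mulVec, Matrix.vecMul_vecMul]
    have hAH : (ᾱ (E i i0) z)ᴴ = ᾱ (E i0 i) z := by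
      have : star (ᾱ (E i i0) z) = ᾱ (star (E i i0)) z := (hstarpt _ _).symm
      rw [show (ᾱ (E i i0) z)ᴴ = star (ᾱ (E i i0) z) from rfl, this]
      congr 2
      simp only [hE]
      exact Aux8.stdBasis_star i i0
    rw [hAH]
    by_cases hij : i = j
    · subst hij
      have h1 : ᾱ (E i0 i) z * ᾱ (E i i0) z = p z := by
        rw [← hmulpt, hEsame, hp]
      rw [h1]
      have h2 : star (ξ z) ᵥ* p z = star (ξ z) := by
        have h3 : star (p z *ᵥ ξ z) = star (ξ z) ᵥ* (p z)ᴴ := Matrix.star_mulVec _ _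
        rw [hpξ z] at h3
        rw [show (p z)ᴴ = star (p z) from rfl, hherm] at h3
        exact h3.symm
      rw [h2, hip z, Matrix.one_apply_eq]
    · have h1 : ᾱ (E i0 i) z * ᾱ (E j i0) z = 0 := by
        rw [← hmulpt, hEne i0 i j i0 hij, _root_.map_zero]
        rfl
      rw [h1, Matrix.vecMul_zero, zero_dotProduct, Matrix.one_apply_ne hij]
  -- the determinant
  set F : Aux8.DD → ℂ := fun z => (W z).det with hF
  have hFc : Continuous F := hWc.matrix_det
  have hFabs : ∀ z, ‖F z‖ = 1 := by
    intro z
    apply Aux8.conj_mul_self_one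
    have := congrArg Matrix.det (hWunit z)
    rwa [Matrix.det_mul, Matrix.det_conjTranspose, Matrix.det_one] at this
  -- boundary computations
  have hd0 : ∀ y : Aux8.Sp, Aux8.dvec k (y:ℂ) i0 = (y:ℂ) := by
    intro y; simp [Aux8.dvec, hi0]
  have hyconj : ∀ y : Aux8.Sp, (y:ℂ) * star (y:ℂ) = 1 := by
    intro y
    rw [RCLike.star_def, Complex.mul_conj]
    rw [Complex.normSq_eq_norm_sq, Aux8.absSp]
    norm_num
  have hpb : ∀ y : Aux8.Sp, p (incl y) = E i0 i0 := by
    intro y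
    rw [hp, hincl]
    rw [hbd]
    rw [show Aux8.conjHom k (E i0 i0) y
      = (Aux8.dvec k (y:ℂ) i0 * star (Aux8.dvec k (y:ℂ) i0)) • E i0 i0 from
        Aux8.conj_stdBasis k y i0 i0]
    rw [hd0, hyconj, one_smul]
  set lam : Aux8.Sp → ℂ := fun y => ξ (incl y) i0 with hlam
  have hlamc : Continuous lam := by
    apply (continuous_apply i0).comp
    apply hξc.comp
    apply Continuous.subtype_mk continuous_subtype_val
  have hsupp : ∀ (y : Aux8.Sp) (i : Fin k), i ≠ i0 → ξ (incl y) i = 0 := by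
    intro y i hi
    have h1 := congrFun (hpξ (incl y)).symm i
    rw [hpb] at h1
    rw [h1]
    simp only [hE]
    rw [Aux8.stdBasis_mulVec]
    rw [if_neg (by exact fun h => hi h.symm)]
  have hlamabs : ∀ y, ‖lam y‖ = 1 := by
    intro y
    apply Aux8.conj_mul_self_one
    have h1 := hip (incl y)
    rw [dotProduct] at h1
    rw [Finset.sum_eq_single i0] at h1
    · exact h1
    · intro l _ hl
      rw [Pi.star_apply, hsupp y l hl]
      simp
    · intro h; simp at h
  have hWb : ∀ y : Aux8.Sp,
      W (incl y) = Matrix.diagonal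
        (fun j => Aux8.dvec k (y:ℂ) j * star (y:ℂ) * lam y) := by
    intro y
    ext i j
    rw [hW]
    show (ᾱ (E j i0) (incl y) *ᵥ ξ (incl y)) i = _
    rw [hincl, hbd]
    rw [show Aux8.conjHom k (E j i0) y
      = (Aux8.dvec k (y:ℂ) j * star (Aux8.dvec k (y:ℂ) i0)) • E j i0 from
        Aux8.conj_stdBasis k y j i0]
    rw [hd0]
    rw [Matrix.smul_mulVec, Pi.smul_apply]
    simp only [hE]
    rw [Aux8.stdBasis_mulVec]
    rw [Matrix.diagonal_apply]
    by_cases hji : j = i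
    · subst hji
      rw [if_pos rfl, if_pos rfl]
      rw [smul_eq_mul]
    · rw [if_neg hji, if_neg (fun h => hji h.symm), smul_zero]
  have hdetb : ∀ y : Aux8.Sp, F (incl y) = (y:ℂ) * (star (y:ℂ) * lam y)^k := by
    intro y
    rw [hF]
    show (W (incl y)).det = _
    rw [hWb, Matrix.det_diagonal]
    have hre : ∀ j : Fin k, Aux8.dvec k (y:ℂ) j * star (y:ℂ) * lam y
        = Aux8.dvec k (y:ℂ) j * (star (y:ℂ) * lam y) := fun j => by ring
    rw [Finset.prod_congr rfl (fun j _ => hre j)]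
    rw [Finset.prod_mul_distrib, Finset.prod_const, Finset.card_univ, Fintype.card_fin]
    congr 1
    have hdd : ∀ j : Fin k, Aux8.dvec k (y:ℂ) j = if j = i0 then (y:ℂ) else 1 := by
      intro j
      simp only [Aux8.dvec]
      congr 1
      simp [Fin.ext_iff, hi0]
    rw [Finset.prod_congr rfl (fun j _ => hdd j)]
    rw [Finset.prod_ite_eq']
    simp
  -- the circle parametrization
  have hcmem : ∀ θ : ℝ, Complex.exp (((2*Real.pi*θ : ℝ) : ℂ) * Complex.I)
      ∈ Metric.sphere (0:ℂ) 1 := by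
    intro θ
    rw [mem_sphere_zero_iff_norm]
    exact Complex.norm_exp_ofReal_mul_I _
  set cθ : Aux8.I01 → Aux8.Sp := fun θ =>
    ⟨Complex.exp (((2*Real.pi*θ.1 : ℝ) : ℂ) * Complex.I), hcmem θ.1⟩ with hcθ
  have hcθc : Continuous cθ := by
    apply Continuous.subtype_mk
    apply Complex.continuous_exp.comp
    apply Continuous.mul _ continuous_const
    exact Complex.continuous_ofReal.comp
      (continuous_const.mul continuous_subtype_val)
  have hc10 : cθ ⟨1, by norm_num⟩ = cθ ⟨0, by norm_num⟩ := by
    apply Subtype.ext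
    show Complex.exp _ = Complex.exp _
    rw [show ((2*Real.pi*(1:ℝ) : ℝ) : ℂ) * Complex.I = 2*Real.pi*Complex.I by push_cast; ring]
    rw [show ((2*Real.pi*(0:ℝ) : ℝ) : ℂ) * Complex.I = 0 by push_cast; ring]
    rw [Complex.exp_two_pi_mul_I, Complex.exp_zero]
  -- lift of F over the disk
  set coneF : C(Aux8.DD × Aux8.I01, ℂ) :=
    ⟨fun w => F ⟨((w.2.1 : ℝ) : ℂ) * w.1.1, Aux8.memD w⟩, by
      apply hFc.comp
      apply Continuous.subtype_mk
      exact (Complex.continuous_ofReal.comp (continuous_subtype_val.comp continuous_snd)).mul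
        (continuous_subtype_val.comp continuous_fst)⟩ with hconeF
  have hconeF0 : ∀ x : Aux8.DD, coneF (x, ⟨0, by norm_num⟩)
      = Complex.exp ((Complex.arg (F c0) : ℂ) * Complex.I) := by
    intro x
    have h1 : coneF (x, ⟨0, by norm_num⟩) = F c0 := by
      show F _ = F c0
      congr 1
      apply Subtype.ext
      simp [hc0]
    rw [h1]
    have := Complex.norm_mul_exp_arg_mul_I (F c0)
    rw [hFabs c0] at this
    simpa using this.symm
  obtain ⟨G, hGc, hGspec⟩ := Aux8.cone_lift coneF
    (fun w => hFabs _) (Complex.arg (F c0)) hconeF0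
  have hGF : ∀ x : Aux8.DD, F x = Complex.exp ((G x : ℂ) * Complex.I) := by
    intro x
    have := hGspec x
    rw [show coneF (x, ⟨1, by norm_num⟩) = F x from by
      show F _ = F x
      congr 1
      apply Subtype.ext
      simp] at this
    exact this
  -- lift of lam along the circle
  have hmemI : ∀ w : Aux8.I01 × Aux8.I01, w.2.1 * w.1.1 ∈ Set.Icc (0:ℝ) 1 := by
    intro w
    constructor
    · exact mul_nonneg w.2.2.1 w.1.2.1
    · exact mul_le_one₀ w.2.2.2 w.1.2.1 w.1.2.2
  set coneL : C(Aux8.I01 × Aux8.I01, ℂ) :=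
    ⟨fun w => lam (cθ ⟨w.2.1 * w.1.1, hmemI w⟩), by
      apply hlamc.comp
      apply hcθc.comp
      apply Continuous.subtype_mk
      exact (continuous_subtype_val.comp continuous_snd).mul
        (continuous_subtype_val.comp continuous_fst)⟩ with hconeL
  have hconeL0 : ∀ θ : Aux8.I01, coneL (θ, ⟨0, by norm_num⟩)
      = Complex.exp ((Complex.arg (lam (cθ ⟨0, by norm_num⟩)) : ℂ) * Complex.I) := by
    intro θ
    have hAB : (⟨((⟨0, by norm_num⟩ : Aux8.I01)).1 * θ.1,
        hmemI (θ, ⟨0, by norm_num⟩)⟩ : Aux8.I01) = ⟨0, by norm_num⟩ := by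
      apply Subtype.ext
      show (0:ℝ) * θ.1 = 0
      ring
    have h1 : coneL (θ, ⟨0, by norm_num⟩) = lam (cθ ⟨0, by norm_num⟩) :=
      congrArg (fun t => lam (cθ t)) hAB
    rw [h1]
    have := Complex.norm_mul_exp_arg_mul_I (lam (cθ ⟨0, by norm_num⟩))
    rw [hlamabs _] at this
    simpa using this.symm
  obtain ⟨Λ, hΛc, hΛspec'⟩ := Aux8.cone_lift coneL
    (fun w => hlamabs _) (Complex.arg (lam (cθ ⟨0, by norm_num⟩))) hconeL0
  have hΛspec : ∀ θ : Aux8.I01, lam (cθ θ) = Complex.exp ((Λ θ : ℂ) * Complex.I) := by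
    intro θ
    have := hΛspec' θ
    have hAB : (⟨((⟨1, by norm_num⟩ : Aux8.I01)).1 * θ.1,
        hmemI (θ, ⟨1, by norm_num⟩)⟩ : Aux8.I01) = θ := by
      apply Subtype.ext
      show (1:ℝ) * θ.1 = θ.1
      ring
    have h1 : coneL (θ, ⟨1, by norm_num⟩) = lam (cθ θ) :=
      congrArg (fun t => lam (cθ t)) hAB
    rw [h1] at this
    exact this
  -- the winding identity at each θ
  have hmain : ∀ θ : Aux8.I01, ∃ n : ℤ,
      2*Real.pi*θ.1 + k * (Λ θ - 2*Real.pi*θ.1)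
        = G (incl (cθ θ)) + n * (2*Real.pi) := by
    intro θ
    apply Aux8.exp_eq_exp_real
    have h1 : ((cθ θ : Aux8.Sp) : ℂ)
        = Complex.exp (((2*Real.pi*θ.1 : ℝ) : ℂ) * Complex.I) := rfl
    have h2 : star ((cθ θ : Aux8.Sp) : ℂ)
        = Complex.exp (-(((2*Real.pi*θ.1 : ℝ) : ℂ) * Complex.I)) := by
      rw [h1, RCLike.star_def, ← Complex.exp_conj]
      congr 1
      rw [_root_.map_mul, Complex.conj_ofReal, Complex.conj_I]
      ring
    set aE : ℂ := ((2*Real.pi*θ.1 : ℝ) : ℂ) * Complex.I with haE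
    set bE : ℂ := ((Λ θ : ℝ) : ℂ) * Complex.I with hbE
    have hFval : Complex.exp ((G (incl (cθ θ)) : ℂ) * Complex.I)
        = Complex.exp aE * (Complex.exp (-aE) * Complex.exp bE)^k := by
      rw [← hGF (incl (cθ θ)), hdetb (cθ θ), h1, h2, hΛspec θ]
    have hcalc : Complex.exp (((2*Real.pi*θ.1 + k * (Λ θ - 2*Real.pi*θ.1) : ℝ) : ℂ) * Complex.I)
        = Complex.exp aE * (Complex.exp (-aE) * Complex.exp bE)^k := by
      calc Complex.exp (((2*Real.pi*θ.1 + k * (Λ θ - 2*Real.pi*θ.1) : ℝ) : ℂ) * Complex.I)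
          = Complex.exp (aE + (k:ℕ) * (-aE + bE)) := by
            congr 1
            rw [haE, hbE]
            push_cast
            ring
        _ = Complex.exp aE * Complex.exp ((k:ℕ) * (-aE + bE)) := Complex.exp_add _ _
        _ = Complex.exp aE * (Complex.exp (-aE + bE))^k := by rw [Complex.exp_nat_mul]
        _ = Complex.exp aE * (Complex.exp (-aE) * Complex.exp bE)^k := by rw [Complex.exp_add]
    exact hcalc.trans hFval.symm
  -- the continuous winding-number function
  have hinclc : Continuous incl := Continuous.subtype_mk continuous_subtype_val _
  set f : Aux8.I01 → ℝ := fun θ =>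
    (2*Real.pi*θ.1 + k * (Λ θ - 2*Real.pi*θ.1) - G (incl (cθ θ))) / (2*Real.pi) with hfdef
  have hpi : (0:ℝ) < 2*Real.pi := by positivity
  have hfc : Continuous f := by
    apply Continuous.div_const
    apply Continuous.sub
    · apply Continuous.add
      · exact continuous_const.mul continuous_subtype_val
      · exact continuous_const.mul (hΛc.sub (continuous_const.mul continuous_subtype_val))
    · exact hGc.comp (hinclc.comp hcθc)
  have hfint : ∀ θ, ∃ n : ℤ, f θ = n := by
    intro θ
    obtain ⟨n, hn⟩ := hmain θ
    refine ⟨n, ?_⟩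
    rw [hfdef]
    show (2*Real.pi*θ.1 + k * (Λ θ - 2*Real.pi*θ.1) - G (incl (cθ θ))) / (2*Real.pi) = n
    have h4 : 2*Real.pi*θ.1 + k * (Λ θ - 2*Real.pi*θ.1) - G (incl (cθ θ))
        = n * (2*Real.pi) := by linarith [hn]
    rw [h4, mul_div_assoc, div_self (ne_of_gt hpi), mul_one]
  have h2 : f ⟨0, by norm_num⟩ = f ⟨1, by norm_num⟩ := Aux8.int_valued_const hfc hfint
  obtain ⟨m, hm⟩ := Aux8.exp_eq_exp_real
    (A := Λ ⟨1, by norm_num⟩) (B := Λ ⟨0, by norm_num⟩)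
    (by rw [← hΛspec ⟨1, by norm_num⟩, ← hΛspec ⟨0, by norm_num⟩, hc10])
  have hGv : G (incl (cθ ⟨1, by norm_num⟩)) = G (incl (cθ ⟨0, by norm_num⟩)) := by
    rw [hc10]
  have h3 := congrArg (fun x : ℝ => x * (2*Real.pi)) h2
  simp only [hfdef] at h3
  rw [div_mul_cancel₀ _ (ne_of_gt hpi), div_mul_cancel₀ _ (ne_of_gt hpi)] at h3
  rw [hGv, hm] at h3
  have h3' : 2*Real.pi*(0:ℝ) + (k:ℝ) * (Λ ⟨0, by norm_num⟩ - 2*Real.pi*(0:ℝ))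
        - G (incl (cθ ⟨0, by norm_num⟩))
      = 2*Real.pi*(1:ℝ)
        + (k:ℝ) * ((Λ ⟨0, by norm_num⟩ + m * (2*Real.pi)) - 2*Real.pi*(1:ℝ))
        - G (incl (cθ ⟨0, by norm_num⟩)) := h3
  have h4 : 2*Real.pi * ((k:ℝ) * m - ((k:ℝ) - 1)) = 0 := by linear_combination -h3'
  have hreal : (k:ℝ) * m = (k:ℝ) - 1 := by
    rcases mul_eq_zero.mp h4 with h | h
    · exact absurd h (ne_of_gt hpi)
    · linarith
  have hint : (k:ℤ) * m = (k:ℤ) - 1 := by exact_mod_cast hreal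
  have hdvd : (k:ℤ) ∣ 1 := ⟨1 - m, by linear_combination hint⟩
  have hle : (k:ℤ) ≤ 1 := Int.le_of_dvd one_pos hdvd
  have : (2:ℤ) ≤ (k:ℤ) := by exact_mod_cast hk
  omega
end
end

section
/- Let X be a connected finite simplicial complex, F ⊂ C(X) a finite set which generates C(X) as a C*-algebra, η > 0, and n a positive integer. Then there is δ > 0 such that for any two unital homomorphisms φ, ψ: C(X) → M_n(ℂ), if ‖φ(f) − ψ(f)‖ < δ for all f ∈ F, then Sp(φ) and Sp(ψ) can be paired within η. -/
noncomputable section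

open scoped Matrix.Norms.L2Operator Kronecker
open Matrix

section Stmt9Aux

noncomputable instance matCStarAlgebra (n : ℕ) : CStarAlgebra (Mat n) := Matrix.instCStarAlgebra

lemma coord_le_norm' {n : ℕ} (v : EuclideanSpace ℂ (Fin n)) (i : Fin n) : ‖v i‖ ≤ ‖v‖ := by
  rw [EuclideanSpace.norm_eq]
  refine le_trans ?_ (Real.sqrt_le_sqrt (Finset.single_le_sum
    (f := fun k => ‖v k‖ ^ 2) (fun k _ => sq_nonneg _) (Finset.mem_univ i)))
  rw [Real.sqrt_sq (norm_nonneg _)]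

lemma entry_le_norm' {n : ℕ} (M : Mat n) (i j : Fin n) : ‖M i j‖ ≤ ‖M‖ := by
  have h := M.l2_opNorm_mulVec (EuclideanSpace.single j 1)
  rw [EuclideanSpace.norm_single, norm_one, mul_one] at h
  refine le_trans ?_ h
  have h2 : ((EuclideanSpace.equiv (Fin n) ℂ).symm <| M *ᵥ (EuclideanSpace.single j 1)) i
      = M i j := by
    simp [Matrix.mulVec, dotProduct, EuclideanSpace.single_apply]
  calc ‖M i j‖ = ‖((EuclideanSpace.equiv (Fin n) ℂ).symm <|
        M *ᵥ (EuclideanSpace.single j 1)) i‖ := by rw [h2]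
    _ ≤ _ := coord_le_norm' _ i

lemma trace_norm_le' {n : ℕ} (M : Mat n) : ‖M.trace‖ ≤ n * ‖M‖ := by
  calc ‖M.trace‖ ≤ ∑ i : Fin n, ‖M i i‖ := by
        rw [Matrix.trace]; exact norm_sum_le _ _
    _ ≤ ∑ _i : Fin n, ‖M‖ := Finset.sum_le_sum fun i _ => entry_le_norm' M i i
    _ = n * ‖M‖ := by simp [Finset.sum_const, mul_comm]

lemma trace_of_diagRep' {X : Type} [MetricSpace X] {n : ℕ}
    {φ : C(X, ℂ) →⋆ₐ[ℂ] Mat n} {x : Fin n → X}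
    (h : DiagRep (fun f => φ f) x) (g : C(X, ℂ)) :
    (φ g).trace = ∑ i, g (x i) := by
  obtain ⟨u, hu, hrep⟩ := h
  rw [show φ g = _ from hrep g, Matrix.trace_mul_comm, ← Matrix.mul_assoc,
    (Unitary.mem_iff.mp hu).1, Matrix.one_mul, Matrix.trace_diagonal]

lemma close_on_adjoin' {X : Type} [MetricSpace X] [CompactSpace X] {n : ℕ}
    {F : Set C(X, ℂ)} {p : C(X, ℂ)} (hp : p ∈ StarAlgebra.adjoin ℂ F) :
    ∀ ε > (0:ℝ), ∃ δ > (0:ℝ), ∀ φ ψ : C(X, ℂ) →⋆ₐ[ℂ] Mat n,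
      (∀ f ∈ F, ‖φ f - ψ f‖ < δ) → ‖φ p - ψ p‖ < ε := by
  induction hp using StarAlgebra.adjoin_induction with
  | mem f hf =>
      exact fun ε hε => ⟨ε, hε, fun φ ψ h => h f hf⟩
  | algebraMap r =>
      intro ε hε
      refine ⟨1, one_pos, fun φ ψ _ => ?_⟩
      simp [AlgHomClass.commutes, sub_self, norm_zero, hε]
  | add a b ha hb iha ihb =>
      intro ε hε
      obtain ⟨δ₁, hδ₁, H₁⟩ := iha (ε/2) (by positivity)
      obtain ⟨δ₂, hδ₂, H₂⟩ := ihb (ε/2) (by positivity)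
      refine ⟨min δ₁ δ₂, lt_min hδ₁ hδ₂, fun φ ψ h => ?_⟩
      have h₁ := H₁ φ ψ (fun f hf => lt_of_lt_of_le (h f hf) (min_le_left _ _))
      have h₂ := H₂ φ ψ (fun f hf => lt_of_lt_of_le (h f hf) (min_le_right _ _))
      calc ‖φ (a + b) - ψ (a + b)‖ = ‖(φ a - ψ a) + (φ b - ψ b)‖ := by
            rw [map_add, map_add]; congr 1; abel
        _ ≤ ‖φ a - ψ a‖ + ‖φ b - ψ b‖ := norm_add_le _ _
        _ < ε/2 + ε/2 := add_lt_add h₁ h₂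
        _ = ε := by ring
  | mul a b ha hb iha ihb =>
      intro ε hε
      obtain ⟨δ₂, hδ₂, H₂⟩ := ihb (ε/(2*(‖a‖+1))) (by positivity)
      obtain ⟨δ₁, hδ₁, H₁⟩ := iha (ε/(2*(‖b‖+1))) (by positivity)
      refine ⟨min δ₁ δ₂, lt_min hδ₁ hδ₂, fun φ ψ h => ?_⟩
      have h₁ := H₁ φ ψ (fun f hf => lt_of_lt_of_le (h f hf) (min_le_left _ _))
      have h₂ := H₂ φ ψ (fun f hf => lt_of_lt_of_le (h f hf) (min_le_right _ _))
      have hφa : ‖φ a‖ ≤ ‖a‖ + 1 :=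
        (NonUnitalStarAlgHom.norm_apply_le φ a).trans (by linarith)
      have hψb : ‖ψ b‖ ≤ ‖b‖ + 1 :=
        (NonUnitalStarAlgHom.norm_apply_le ψ b).trans (by linarith)
      have key : φ (a * b) - ψ (a * b) = φ a * (φ b - ψ b) + (φ a - ψ a) * ψ b := by
        rw [_root_.map_mul, _root_.map_mul, mul_sub, sub_mul]; abel
      have e1 : ‖φ a * (φ b - ψ b)‖ < (‖a‖+1) * (ε/(2*(‖a‖+1))) := by
        calc ‖φ a * (φ b - ψ b)‖ ≤ ‖φ a‖ * ‖φ b - ψ b‖ := norm_mul_le _ _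
          _ ≤ (‖a‖+1) * ‖φ b - ψ b‖ :=
              mul_le_mul_of_nonneg_right hφa (norm_nonneg _)
          _ < (‖a‖+1) * (ε/(2*(‖a‖+1))) := mul_lt_mul_of_pos_left h₂ (by positivity)
      have e2 : ‖(φ a - ψ a) * ψ b‖ < (ε/(2*(‖b‖+1))) * (‖b‖+1) := by
        calc ‖(φ a - ψ a) * ψ b‖ ≤ ‖φ a - ψ a‖ * ‖ψ b‖ := norm_mul_le _ _
          _ ≤ ‖φ a - ψ a‖ * (‖b‖+1) :=
              mul_le_mul_of_nonneg_left hψb (norm_nonneg _)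
          _ < (ε/(2*(‖b‖+1))) * (‖b‖+1) := mul_lt_mul_of_pos_right h₁ (by positivity)
      have ha1 : (‖a‖+1) * (ε/(2*(‖a‖+1))) = ε/2 := by field_simp
      have hb1 : (ε/(2*(‖b‖+1))) * (‖b‖+1) = ε/2 := by field_simp
      calc ‖φ (a * b) - ψ (a * b)‖
          ≤ ‖φ a * (φ b - ψ b)‖ + ‖(φ a - ψ a) * ψ b‖ := by
            rw [key]; exact norm_add_le _ _
        _ < (‖a‖+1) * (ε/(2*(‖a‖+1))) + (ε/(2*(‖b‖+1))) * (‖b‖+1) := add_lt_add e1 e2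
        _ = ε := by rw [ha1, hb1]; ring
  | star a ha iha =>
      intro ε hε
      obtain ⟨δ, hδ, H⟩ := iha ε hε
      refine ⟨δ, hδ, fun φ ψ h => ?_⟩
      have hst : φ (star a) - ψ (star a) = star (φ a - ψ a) := by
        rw [map_star, map_star, star_sub]
      rw [hst, Matrix.star_eq_conjTranspose, Matrix.l2_opNorm_conjTranspose]
      exact H φ ψ h

end Stmt9Aux


/-- If two unital homomorphisms `φ, ψ : C(X) → M_n(ℂ)` are `δ`-close on a finite generating
set, then their spectra can be paired within `η` (for suitable `δ` depending on
`X, F, η, n`). -/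
theorem stmt9 (X : Type) [MetricSpace X] [CompactSpace X] [ConnectedSpace X]
    (hX : FinComplex X)
    (F : Set C(X, ℂ)) (hF : F.Finite)
    (hgen : (StarAlgebra.adjoin ℂ F).topologicalClosure = ⊤)
    (η : ℝ) (hη : 0 < η) (n : ℕ) (hn : 0 < n) :
    ∃ δ > (0:ℝ), ∀ φ ψ : C(X, ℂ) →⋆ₐ[ℂ] Mat n,
      (∀ f ∈ F, ‖φ f - ψ f‖ < δ) →
      ∀ x y : Fin n → X, DiagRep (fun f => φ f) x → DiagRep (fun f => ψ f) y →
        PairedWithin x y η := by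
  classical
  -- finite cover of X by balls of radius η/8
  obtain ⟨Z, hZ⟩ : ∃ Z : Finset X, ∀ x : X, ∃ z ∈ Z, dist x z < η / 8 := by
    obtain ⟨s, hs⟩ := isCompact_univ.elim_finite_subcover
      (fun z : X => Metric.ball z (η / 8)) (fun _ => Metric.isOpen_ball)
      (fun x _ => Set.mem_iUnion.2 ⟨x, Metric.mem_ball_self (by positivity)⟩)
    refine ⟨s, fun x => ?_⟩
    have hx := hs (Set.mem_univ x)
    simp only [Set.mem_iUnion, Metric.mem_ball] at hx
    obtain ⟨z, hz, hd⟩ := hx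
    exact ⟨z, hz, hd⟩
  -- test functions
  set hre : Finset X → X → ℝ :=
    fun T x => min 1 (max 0 (2 - (8/η) * Metric.infDist x (↑T : Set X))) with hre_def
  have hre_cont : ∀ T, Continuous (hre T) := fun T =>
    continuous_const.min (continuous_const.max
      (continuous_const.sub (continuous_const.mul (Metric.continuous_infDist_pt (↑T : Set X)))))
  set hc : Finset X → C(X, ℂ) := fun T => toComplexC ⟨hre T, hre_cont T⟩ with hc_def
  have hre_nonneg : ∀ T x, 0 ≤ hre T x := fun T x =>
    le_min zero_le_one (le_max_left 0 _)
  have hre_le_one : ∀ T x, hre T x ≤ 1 := fun T x => min_le_left _ _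
  have hre_eq_one : ∀ (T : Finset X) (x : X), (∃ z ∈ T, dist x z < η/8) → hre T x = 1 := by
    rintro T x ⟨z, hzT, hdz⟩
    have hd : Metric.infDist x ↑T ≤ dist x z :=
      Metric.infDist_le_dist_of_mem (Finset.mem_coe.mpr hzT)
    have h2 : (8/η) * dist x z < 1 := by
      rw [div_mul_eq_mul_div, div_lt_one hη]; linarith
    have h1 : (1:ℝ) ≤ 2 - (8/η) * Metric.infDist x ↑T := by
      have := mul_le_mul_of_nonneg_left hd (le_of_lt (by positivity : (0:ℝ) < 8/η))
      linarith
    exact min_eq_left (le_max_of_le_right h1)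
  have hre_pos_imp : ∀ (T : Finset X) (x : X), T.Nonempty → 0 < hre T x →
      ∃ z ∈ T, dist x z < η/4 := by
    intro T x hT hpos
    have h0 : 0 < 2 - (8/η) * Metric.infDist x ↑T := by
      by_contra hcon
      push_neg at hcon
      have hz : hre T x = 0 := by
        rw [hre_def]; simp only []
        rw [max_eq_left hcon, min_eq_right zero_le_one]
      rw [hz] at hpos; exact lt_irrefl 0 hpos
    have h8 : (8/η) * Metric.infDist x ↑T < 2 := by linarith
    rw [div_mul_eq_mul_div, div_lt_iff₀ hη] at h8
    have hd : Metric.infDist x ↑T < η/4 := by linarith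
    obtain ⟨z, hz, hdz⟩ :=
      (Metric.infDist_lt_iff (Finset.coe_nonempty.mpr hT)).mp hd
    exact ⟨z, Finset.mem_coe.mp hz, hdz⟩
  -- approximation and closeness data for each test function
  have hdense : ∀ g : C(X, ℂ), ∀ ε > (0:ℝ), ∃ p ∈ StarAlgebra.adjoin ℂ F, ‖g - p‖ < ε := by
    intro g ε hε
    have hg : g ∈ (StarAlgebra.adjoin ℂ F).topologicalClosure := by rw [hgen]; trivial
    have hg' : g ∈ closure ((StarAlgebra.adjoin ℂ F : Set C(X, ℂ))) := hg
    obtain ⟨p, hp, hdist⟩ := Metric.mem_closure_iff.mp hg' ε hε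
    exact ⟨p, hp, by rw [← dist_eq_norm]; exact hdist⟩
  have hnn : (0:ℝ) < n := by exact_mod_cast hn
  have hTdata : ∀ T : Finset X, ∃ δT > (0:ℝ), ∀ φ ψ : C(X, ℂ) →⋆ₐ[ℂ] Mat n,
      (∀ f ∈ F, ‖φ f - ψ f‖ < δT) →
      ‖(φ (hc T)).trace - (ψ (hc T)).trace‖ < 1/2 := by
    intro T
    obtain ⟨p, hpmem, hpnorm⟩ := hdense (hc T) (1/(8*n)) (by positivity)
    obtain ⟨δT, hδT, H⟩ := close_on_adjoin' (n := n) hpmem (1/(8*n)) (by positivity)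
    refine ⟨δT, hδT, fun φ ψ hcl => ?_⟩
    have hsplit : φ (hc T) - ψ (hc T) =
        φ (hc T - p) + (φ p - ψ p) + ψ (p - hc T) := by
      rw [map_sub, map_sub]; abel
    have b1 : ‖(φ (hc T - p)).trace‖ < 1/8 := by
      calc ‖(φ (hc T - p)).trace‖ ≤ n * ‖φ (hc T - p)‖ := trace_norm_le' _
        _ ≤ n * ‖hc T - p‖ :=
            mul_le_mul_of_nonneg_left (NonUnitalStarAlgHom.norm_apply_le φ _) (le_of_lt hnn)
        _ < n * (1/(8*n)) := mul_lt_mul_of_pos_left hpnorm hnn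
        _ = 1/8 := by field_simp
    have b3 : ‖(ψ (p - hc T)).trace‖ < 1/8 := by
      calc ‖(ψ (p - hc T)).trace‖ ≤ n * ‖ψ (p - hc T)‖ := trace_norm_le' _
        _ ≤ n * ‖p - hc T‖ :=
            mul_le_mul_of_nonneg_left (NonUnitalStarAlgHom.norm_apply_le ψ _) (le_of_lt hnn)
        _ = n * ‖hc T - p‖ := by rw [norm_sub_rev]
        _ < n * (1/(8*n)) := mul_lt_mul_of_pos_left hpnorm hnn
        _ = 1/8 := by field_simp
    have b2 : ‖(φ p - ψ p).trace‖ < 1/8 := by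
      calc ‖(φ p - ψ p).trace‖ ≤ n * ‖φ p - ψ p‖ := trace_norm_le' _
        _ < n * (1/(8*n)) := mul_lt_mul_of_pos_left (H φ ψ hcl) hnn
        _ = 1/8 := by field_simp
    calc ‖(φ (hc T)).trace - (ψ (hc T)).trace‖
        = ‖(φ (hc T - p)).trace + (φ p - ψ p).trace + (ψ (p - hc T)).trace‖ := by
          rw [← Matrix.trace_sub, hsplit, Matrix.trace_add, Matrix.trace_add,
            Matrix.trace_sub]
      _ ≤ ‖(φ (hc T - p)).trace + (φ p - ψ p).trace‖ + ‖(ψ (p - hc T)).trace‖ :=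
          norm_add_le _ _
      _ ≤ ‖(φ (hc T - p)).trace‖ + ‖(φ p - ψ p).trace‖ + ‖(ψ (p - hc T)).trace‖ := by
          gcongr; exact norm_add_le _ _
      _ < 1/8 + 1/8 + 1/8 := add_lt_add (add_lt_add b1 b2) b3
      _ ≤ 1/2 := by norm_num
  choose δf hδf hδprop using hTdata
  obtain ⟨T₀, hT₀, hmin⟩ :=
    Finset.exists_min_image Z.powerset δf ⟨∅, Finset.empty_mem_powerset Z⟩
  refine ⟨δf T₀, hδf T₀, fun φ ψ hclose x y hφ hψ => ?_⟩
  set t : Fin n → Finset (Fin n) :=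
    fun i => Finset.univ.filter fun j => dist (x i) (y j) < η with ht_def
  have hall : ∀ S : Finset (Fin n), S.card ≤ (S.biUnion t).card := by
    intro S
    rcases S.eq_empty_or_nonempty with rfl | hS
    · simp
    set T : Finset X := Z.filter (fun z => ∃ i ∈ S, dist (x i) z < η/8) with hT
    have hTZ : T ∈ Z.powerset := Finset.mem_powerset.mpr (Finset.filter_subset _ _)
    have hTne : T.Nonempty := by
      obtain ⟨i, hiS⟩ := hS
      obtain ⟨z, hzZ, hdz⟩ := hZ (x i)
      exact ⟨z, Finset.mem_filter.mpr ⟨hzZ, ⟨i, hiS, hdz⟩⟩⟩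
    have hx' : (φ (hc T)).trace = ((∑ i, hre T (x i) : ℝ) : ℂ) := by
      rw [trace_of_diagRep' hφ, Complex.ofReal_sum]
      exact Finset.sum_congr rfl fun i _ => rfl
    have hy' : (ψ (hc T)).trace = ((∑ j, hre T (y j) : ℝ) : ℂ) := by
      rw [trace_of_diagRep' hψ, Complex.ofReal_sum]
      exact Finset.sum_congr rfl fun j _ => rfl
    have key : |(∑ i, hre T (x i)) - (∑ j, hre T (y j))| < 1/2 := by
      have h1 := hδprop T φ ψ
        (fun f hf => lt_of_lt_of_le (hclose f hf) (hmin T hTZ))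
      rw [hx', hy', ← Complex.ofReal_sub] at h1
      rwa [Complex.norm_real, Real.norm_eq_abs] at h1
    have card_le : (S.card : ℝ) ≤ ∑ i, hre T (x i) := by
      calc (S.card : ℝ) = ∑ _i ∈ S, (1:ℝ) := by simp
        _ = ∑ i ∈ S, hre T (x i) := by
            refine Finset.sum_congr rfl fun i hi => ?_
            obtain ⟨z, hzZ, hdz⟩ := hZ (x i)
            exact (hre_eq_one T (x i)
              ⟨z, Finset.mem_filter.mpr ⟨hzZ, ⟨i, hi, hdz⟩⟩, hdz⟩).symm
        _ ≤ ∑ i, hre T (x i) :=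
            Finset.sum_le_sum_of_subset_of_nonneg (Finset.subset_univ S)
              (fun i _ _ => hre_nonneg T (x i))
    have sum_y_le : (∑ j, hre T (y j)) ≤ ((S.biUnion t).card : ℝ) := by
      have hzero : ∀ j ∈ Finset.univ, j ∉ S.biUnion t → hre T (y j) = 0 := by
        intro j _ hj
        by_contra h0
        have hpos : 0 < hre T (y j) := lt_of_le_of_ne (hre_nonneg _ _) (Ne.symm h0)
        obtain ⟨z, hzT, hdz⟩ := hre_pos_imp T (y j) hTne hpos
        obtain ⟨hzZ, i, hiS, hdi⟩ := Finset.mem_filter.mp hzT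
        apply hj
        refine Finset.mem_biUnion.mpr ⟨i, hiS,
          Finset.mem_filter.mpr ⟨Finset.mem_univ j, ?_⟩⟩
        calc dist (x i) (y j) ≤ dist (x i) z + dist z (y j) := dist_triangle _ _ _
          _ = dist (x i) z + dist (y j) z := by rw [dist_comm z (y j)]
          _ < η/8 + η/4 := add_lt_add hdi hdz
          _ < η := by linarith
      calc (∑ j, hre T (y j)) = ∑ j ∈ S.biUnion t, hre T (y j) :=
            (Finset.sum_subset (Finset.subset_univ _) hzero).symm
        _ ≤ ∑ _j ∈ S.biUnion t, (1:ℝ) :=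
            Finset.sum_le_sum fun j _ => hre_le_one T (y j)
        _ = ((S.biUnion t).card : ℝ) := by simp
    have hlt : (S.card : ℝ) < ((S.biUnion t).card : ℝ) + 1 := by
      have habs := abs_sub_lt_iff.mp key
      linarith [habs.1]
    exact_mod_cast Nat.lt_add_one_iff.mp (by exact_mod_cast hlt)
  obtain ⟨σf, hinj, hσ⟩ :=
    (Finset.all_card_le_biUnion_card_iff_exists_injective t).mp hall
  have hbij : Function.Bijective σf := Finite.injective_iff_bijective.mp hinj
  refine ⟨Equiv.ofBijective σf hbij, fun i => ?_⟩
  have hi := hσ i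
  rw [ht_def, Finset.mem_filter] at hi
  exact hi.2
end
end

section
/- Let X = X₁ ∨ X₂ ∨ … ∨ X_k be a wedge (bunch) of k intervals X_i = [0,1] joined at a common point, and let Y = [0,1]. Suppose X⁰ = {x₁⁰, x₂⁰, …, x_l⁰} ⊂ X and X¹ = {x₁¹, x₂¹, …, x_l¹} ⊂ X are two l-element multisets with x_i¹ ≠ x_j¹ whenever i ≠ j. Then there are l continuous functions f₁, f₂, …, f_l: Y → X such that: (1) as multisets, {f₁(0), f₂(0), …, f_l(0)} = X⁰ and {f₁(1), f₂(1), …, f_l(1)} = X¹; and (2) for each t ∈ (0,1] and each pair i ≠ j, f_i(t) ≠ f_j(t). -/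
noncomputable section

open scoped Matrix.Norms.L2Operator Kronecker
open Matrix

/-- The wedge (one-point union) of `k` unit intervals, glued at the left endpoints. -/
def wedgeSetoid (k : ℕ) : Setoid (Fin k × unitInterval) where
  r a b := a = b ∨ (a.2 = 0 ∧ b.2 = 0)
  iseqv := by
    refine ⟨fun _ => Or.inl rfl, ?_, ?_⟩
    · rintro a b (rfl | ⟨h1, h2⟩)
      · exact Or.inl rfl
      · exact Or.inr ⟨h2, h1⟩
    · rintro a b c (rfl | ⟨h1, h2⟩) (rfl | ⟨h3, h4⟩)
      · exact Or.inl rfl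
      · exact Or.inr ⟨h3, h4⟩
      · exact Or.inr ⟨h1, h2⟩
      · exact Or.inr ⟨h1, h4⟩

/-- The wedge `X₁ ∨ ⋯ ∨ X_k` of `k` copies of `[0,1]`. -/
def Wedge (k : ℕ) : Type := Quotient (wedgeSetoid k)

instance (k : ℕ) : TopologicalSpace (Wedge k) :=
  inferInstanceAs (TopologicalSpace (Quotient (wedgeSetoid k)))

namespace S14
open Set

noncomputable def mkW (k : ℕ) (b : Fin k) (s : ℝ) : Wedge k :=
  Quotient.mk (wedgeSetoid k) (b, Set.projIcc 0 1 zero_le_one s)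

lemma continuous_mkW (k : ℕ) (b : Fin k) : Continuous fun s : ℝ => mkW k b s := by
  apply Continuous.comp (continuous_quot_mk)
  exact Continuous.prodMk continuous_const continuous_projIcc

lemma mkW_eq_iff (k : ℕ) (b b' : Fin k) {s s' : ℝ} (hs : s ∈ Icc (0:ℝ) 1)
    (hs' : s' ∈ Icc (0:ℝ) 1) :
    mkW k b s = mkW k b' s' ↔ (b = b' ∧ s = s') ∨ (s = 0 ∧ s' = 0) := by
  unfold mkW
  rw [Set.projIcc_of_mem _ hs, Set.projIcc_of_mem _ hs']
  constructor
  · intro h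
    have h2 : (b, (⟨s, hs⟩ : Icc (0:ℝ) 1)) = (b', ⟨s', hs'⟩) ∨
        ((⟨s, hs⟩ : Icc (0:ℝ) 1) = 0 ∧ (⟨s', hs'⟩ : Icc (0:ℝ) 1) = 0) := Quotient.exact h
    rcases h2 with h2 | ⟨h2, h3⟩
    · left
      exact ⟨congrArg Prod.fst h2, by simpa [Subtype.ext_iff] using congrArg (fun p => (p.2 : ℝ)) h2⟩
    · right
      exact ⟨by simpa [Subtype.ext_iff] using h2, by simpa [Subtype.ext_iff] using h3⟩
  · intro h
    apply Quotient.sound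
    rcases h with ⟨rfl, rfl⟩ | ⟨rfl, rfl⟩
    · exact Or.inl rfl
    · exact Or.inr ⟨rfl, rfl⟩

lemma mkW_ne_same (k : ℕ) (b : Fin k) {s s' : ℝ} (h0 : 0 ≤ s') (hlt : s' < s) (h1 : s ≤ 1) :
    mkW k b s ≠ mkW k b s' := by
  intro h
  rw [mkW_eq_iff k b b ⟨le_trans h0 hlt.le, h1⟩ ⟨h0, le_trans hlt.le h1⟩] at h
  rcases h with ⟨-, h⟩ | ⟨h, h'⟩ <;> linarith

lemma proj_eq_zero {s : ℝ} : (Set.projIcc (0:ℝ) 1 zero_le_one s = 0) ↔ s ≤ 0 := by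
  rw [Subtype.ext_iff]
  rw [Set.coe_projIcc]
  have : ((0 : Icc (0:ℝ) 1) : ℝ) = 0 := rfl
  rw [this, max_eq_left_iff, min_le_iff]
  simp

lemma mkW_ne_branch (k : ℕ) {b b' : Fin k} (hb : b ≠ b') {s s' : ℝ} (hs : 0 < s) :
    mkW k b s ≠ mkW k b' s' := by
  intro h
  have h2 : (b, Set.projIcc (0:ℝ) 1 zero_le_one s) = (b', Set.projIcc (0:ℝ) 1 zero_le_one s') ∨
      (Set.projIcc (0:ℝ) 1 zero_le_one s = 0 ∧ Set.projIcc (0:ℝ) 1 zero_le_one s' = 0) :=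
    Quotient.exact h
  rcases h2 with h2 | ⟨h2, -⟩
  · exact hb (congrArg Prod.fst h2)
  · exact absurd (proj_eq_zero.1 h2) (not_le.2 hs)

lemma mkW_zero (k : ℕ) (b b' : Fin k) {s s' : ℝ} (hs : s ≤ 0) (hs' : s' ≤ 0) :
    mkW k b s = mkW k b' s' := by
  exact Quotient.sound (Or.inr ⟨proj_eq_zero.2 hs, proj_eq_zero.2 hs'⟩)



variable {k l : ℕ}

/-- branch of the representative -/
noncomputable def cIdx (x : Fin l → Wedge k) (i : Fin l) : Fin k := (x i).out.1
/-- radius of the representative -/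
noncomputable def uRad (x : Fin l → Wedge k) (i : Fin l) : ℝ := ((x i).out.2 : ℝ)

lemma uRad_mem (x : Fin l → Wedge k) (i : Fin l) : uRad x i ∈ Icc (0:ℝ) 1 := (x i).out.2.2

lemma x_eq_mkW (x : Fin l → Wedge k) (i : Fin l) : x i = mkW k (cIdx x i) (uRad x i) := by
  conv_lhs => rw [← Quotient.out_eq (x i)]
  unfold mkW cIdx uRad
  congr 1
  refine Prod.ext rfl ?_
  simp [Set.projIcc_val]

/-- sort key: natives (branch 0, positive radius) by decreasing radius first, then
basepoints, then immigrants grouped by branch with increasing radius -/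
noncomputable def key (hk : 1 ≤ k) (x : Fin l → Wedge k) (i : Fin l) : ℝ :=
  if uRad x i = 0 then 2
  else if cIdx x i = ⟨0, hk⟩ then 1 - uRad x i
  else 3 + 2 * ((cIdx x i : ℕ) : ℝ) + uRad x i

noncomputable def rk (hk : 1 ≤ k) (x : Fin l → Wedge k) : Equiv.Perm (Fin l) :=
  (Tuple.sort (key hk x))⁻¹

lemma key_le_of_rk_lt (hk : 1 ≤ k) (x : Fin l → Wedge k) {i j : Fin l}
    (h : rk hk x i < rk hk x j) : key hk x i ≤ key hk x j := by
  have h1 : key hk x i = (key hk x ∘ Tuple.sort (key hk x)) (rk hk x i) := by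
    simp [rk, Function.comp]
  have h2 : key hk x j = (key hk x ∘ Tuple.sort (key hk x)) (rk hk x j) := by
    simp [rk, Function.comp]
  rw [h1, h2]
  exact Tuple.monotone_sort (key hk x) h.le

noncomputable def slot (hk : 1 ≤ k) (x : Fin l → Wedge k) (i : Fin l) : ℝ :=
  ((l : ℝ) - ((rk hk x i : ℕ) : ℝ)) / l

noncomputable def tta (hk : 1 ≤ k) (x : Fin l → Wedge k) (i : Fin l) : ℝ :=
  (((rk hk x i : ℕ) : ℝ) + 1) / ((l : ℝ) + 1)

lemma lpos (i : Fin l) : (0:ℝ) < l := by exact_mod_cast i.pos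

lemma slot_pos (hk : 1 ≤ k) (x : Fin l → Wedge k) (i : Fin l) : 0 < slot hk x i := by
  have h1 : ((rk hk x i : ℕ) : ℝ) < l := by exact_mod_cast (rk hk x i).2
  have := lpos i
  unfold slot
  apply div_pos (by linarith) this

lemma slot_le_one (hk : 1 ≤ k) (x : Fin l → Wedge k) (i : Fin l) : slot hk x i ≤ 1 := by
  have h1 : (0:ℝ) ≤ ((rk hk x i : ℕ) : ℝ) := by positivity
  have := lpos i
  rw [slot, div_le_one this]
  linarith

lemma slot_lt (hk : 1 ≤ k) (x : Fin l → Wedge k) {i j : Fin l}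
    (h : rk hk x i < rk hk x j) : slot hk x j < slot hk x i := by
  have h1 : ((rk hk x i : ℕ) : ℝ) < ((rk hk x j : ℕ) : ℝ) := by exact_mod_cast h
  have := lpos i
  rw [slot, slot, div_lt_div_iff₀ this this]
  nlinarith

lemma tta_pos (hk : 1 ≤ k) (x : Fin l → Wedge k) (i : Fin l) : 0 < tta hk x i := by
  have h1 : (0:ℝ) ≤ ((rk hk x i : ℕ) : ℝ) := by positivity
  have := lpos i
  unfold tta; positivity

lemma tta_lt_one (hk : 1 ≤ k) (x : Fin l → Wedge k) (i : Fin l) : tta hk x i < 1 := by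
  have h1 : ((rk hk x i : ℕ) : ℝ) < l := by exact_mod_cast (rk hk x i).2
  have := lpos i
  rw [tta, div_lt_one (by linarith)]
  linarith

lemma tta_lt (hk : 1 ≤ k) (x : Fin l → Wedge k) {i j : Fin l}
    (h : rk hk x i < rk hk x j) : tta hk x i < tta hk x j := by
  have h1 : ((rk hk x i : ℕ) : ℝ) < ((rk hk x j : ℕ) : ℝ) := by exact_mod_cast h
  have := lpos i
  rw [tta, tta, div_lt_div_iff₀ (by linarith) (by linarith)]
  nlinarith



open unitInterval in
/-- the contraction path of the `i`-th point toward its ladder slot on branch `0`. -/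
noncomputable def pathW (hk : 1 ≤ k) (x : Fin l → Wedge k) (i : Fin l) :
    C(unitInterval, Wedge k) :=
  if uRad x i = 0 then
    ⟨fun t => mkW k ⟨0, hk⟩ (slot hk x i * (t : ℝ)),
     ((continuous_mkW k _).comp (continuous_const.mul continuous_subtype_val))⟩
  else if cIdx x i = ⟨0, hk⟩ then
    ⟨fun t => mkW k ⟨0, hk⟩ ((1 - (t : ℝ)) * uRad x i + (t : ℝ) * slot hk x i),
     ((continuous_mkW k _).comp (by fun_prop))⟩
  else
    ⟨fun t => if (t : ℝ) ≤ tta hk x i then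
        mkW k (cIdx x i) (uRad x i * (1 - (t : ℝ) / tta hk x i))
      else mkW k ⟨0, hk⟩ (slot hk x i * (((t : ℝ) - tta hk x i) / (1 - tta hk x i))), by
      apply Continuous.if_le
      · exact (continuous_mkW k _).comp (by fun_prop)
      · exact (continuous_mkW k _).comp (by fun_prop)
      · exact continuous_subtype_val
      · exact continuous_const
      · intro t ht
        have h0 : tta hk x i ≠ 0 := (tta_pos hk x i).ne'
        apply mkW_zero
        · rw [ht, div_self h0]; simp
        · rw [ht]; simp⟩



lemma pathW_zero (hk : 1 ≤ k) (x : Fin l → Wedge k) (i : Fin l) :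
    pathW hk x i 0 = x i := by
  rw [x_eq_mkW x i]
  unfold pathW
  by_cases hu : uRad x i = 0
  · rw [if_pos hu]
    show mkW k ⟨0, hk⟩ (slot hk x i * ((0 : unitInterval) : ℝ)) = _
    rw [hu]
    exact mkW_zero k _ _ (by simp) le_rfl
  · rw [if_neg hu]
    by_cases hc : cIdx x i = ⟨0, hk⟩
    · rw [if_pos hc, hc]
      show mkW k ⟨0, hk⟩ ((1 - ((0 : unitInterval) : ℝ)) * uRad x i
          + ((0 : unitInterval) : ℝ) * slot hk x i) = _
      norm_num
    · rw [if_neg hc]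
      show (if ((0 : unitInterval) : ℝ) ≤ tta hk x i then _ else _) = _
      rw [if_pos (by simpa using (tta_pos hk x i).le)]
      show mkW k (cIdx x i) (uRad x i * (1 - ((0 : unitInterval) : ℝ) / tta hk x i)) = _
      norm_num

lemma pathW_one (hk : 1 ≤ k) (x : Fin l → Wedge k) (i : Fin l) :
    pathW hk x i 1 = mkW k ⟨0, hk⟩ (slot hk x i) := by
  unfold pathW
  by_cases hu : uRad x i = 0
  · rw [if_pos hu]
    show mkW k ⟨0, hk⟩ (slot hk x i * ((1 : unitInterval) : ℝ)) = _
    norm_num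
  · rw [if_neg hu]
    by_cases hc : cIdx x i = ⟨0, hk⟩
    · rw [if_pos hc]
      show mkW k ⟨0, hk⟩ ((1 - ((1 : unitInterval) : ℝ)) * uRad x i
          + ((1 : unitInterval) : ℝ) * slot hk x i) = _
      norm_num
    · rw [if_neg hc]
      show (if ((1 : unitInterval) : ℝ) ≤ tta hk x i then _ else _) = _
      rw [if_neg (by simpa using (tta_lt_one hk x i).not_ge)]
      show mkW k ⟨0, hk⟩ (slot hk x i * ((((1 : unitInterval) : ℝ) - tta hk x i)
          / (1 - tta hk x i))) = _
      rw [show (((1 : unitInterval) : ℝ) - tta hk x i) / (1 - tta hk x i) = 1 from ?_]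
      · norm_num
      · rw [show ((1 : unitInterval) : ℝ) = (1:ℝ) from rfl]
        exact div_self (by linarith [tta_lt_one hk x i])



lemma pathW_base (hk : 1 ≤ k) (x : Fin l → Wedge k) {i : Fin l} (hu : uRad x i = 0)
    (t : unitInterval) : pathW hk x i t = mkW k ⟨0, hk⟩ (slot hk x i * (t : ℝ)) := by
  unfold pathW; rw [if_pos hu]; rfl

lemma pathW_nat (hk : 1 ≤ k) (x : Fin l → Wedge k) {i : Fin l} (hu : uRad x i ≠ 0)
    (hc : cIdx x i = ⟨0, hk⟩) (t : unitInterval) :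
    pathW hk x i t = mkW k ⟨0, hk⟩ ((1 - (t : ℝ)) * uRad x i + (t : ℝ) * slot hk x i) := by
  unfold pathW; rw [if_neg hu, if_pos hc]; rfl

lemma pathW_shrink (hk : 1 ≤ k) (x : Fin l → Wedge k) {i : Fin l} (hu : uRad x i ≠ 0)
    (hc : ¬ cIdx x i = ⟨0, hk⟩) {t : unitInterval} (h : (t : ℝ) ≤ tta hk x i) :
    pathW hk x i t = mkW k (cIdx x i) (uRad x i * (1 - (t : ℝ) / tta hk x i)) := by
  unfold pathW; rw [if_neg hu, if_neg hc]
  show (if ((t : unitInterval) : ℝ) ≤ tta hk x i then _ else _) = _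
  rw [if_pos h]

lemma pathW_grow (hk : 1 ≤ k) (x : Fin l → Wedge k) {i : Fin l} (hu : uRad x i ≠ 0)
    (hc : ¬ cIdx x i = ⟨0, hk⟩) {t : unitInterval} (h : ¬ (t : ℝ) ≤ tta hk x i) :
    pathW hk x i t
      = mkW k ⟨0, hk⟩ (slot hk x i * (((t : ℝ) - tta hk x i) / (1 - tta hk x i))) := by
  unfold pathW; rw [if_neg hu, if_neg hc]
  show (if ((t : unitInterval) : ℝ) ≤ tta hk x i then _ else _) = _
  rw [if_neg h]



set_option maxHeartbeats 2000000 in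
lemma pathW_ne_of_rk_lt (hk : 1 ≤ k) (x : Fin l → Wedge k) {t : unitInterval}
    (ht : (0:ℝ) < (t : ℝ)) {i j : Fin l} (hij : rk hk x i < rk hk x j) :
    pathW hk x i t ≠ pathW hk x j t := by
  have hκ := key_le_of_rk_lt hk x hij
  have hr := slot_lt hk x hij
  have ha := tta_lt hk x hij
  have hri := slot_pos hk x i
  have hri1 := slot_le_one hk x i
  have hrj := slot_pos hk x j
  have hrj1 := slot_le_one hk x j
  have hai := tta_pos hk x i
  have hai1 := tta_lt_one hk x i
  have haj := tta_pos hk x j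
  have haj1 := tta_lt_one hk x j
  have hui0 := (uRad_mem x i).1
  have hui1 := (uRad_mem x i).2
  have huj0 := (uRad_mem x j).1
  have huj1 := (uRad_mem x j).2
  have ht1 : (t : ℝ) ≤ 1 := t.2.2
  by_cases hui : uRad x i = 0
  · -- i is a basepoint-starter
    by_cases huj : uRad x j = 0
    · rw [pathW_base hk x hui, pathW_base hk x huj]
      exact mkW_ne_same k _ (by positivity) (by nlinarith) (by nlinarith)
    · by_cases hcj : cIdx x j = ⟨0, hk⟩
      · -- impossible: key i = 2 ≤ key j = 1 - uj
        exfalso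
        rw [key, if_pos hui, key, if_neg huj, if_pos hcj] at hκ
        linarith
      · rw [pathW_base hk x hui]
        by_cases htj : (t : ℝ) ≤ tta hk x j
        · rw [pathW_shrink hk x huj hcj htj]
          exact mkW_ne_branch k (fun h => hcj h.symm) (by positivity)
        · rw [pathW_grow hk x huj hcj htj]
          push_neg at htj
          have hD0 : 0 ≤ ((t : ℝ) - tta hk x j) / (1 - tta hk x j) := by
            apply div_nonneg <;> linarith
          have hDt : ((t : ℝ) - tta hk x j) / (1 - tta hk x j) ≤ (t : ℝ) := by
            rw [div_le_iff₀ (by linarith)]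
            nlinarith
          exact mkW_ne_same k _ (by positivity) (by nlinarith) (by nlinarith)
  · by_cases hci : cIdx x i = ⟨0, hk⟩
    · -- i is a native
      have hsi : (t : ℝ) * slot hk x i ≤ (1 - (t : ℝ)) * uRad x i + (t : ℝ) * slot hk x i := by
        nlinarith
      have hsi1 : (1 - (t : ℝ)) * uRad x i + (t : ℝ) * slot hk x i ≤ 1 := by nlinarith
      by_cases huj : uRad x j = 0
      · rw [pathW_nat hk x hui hci, pathW_base hk x huj]
        exact mkW_ne_same k _ (by positivity) (by nlinarith) hsi1
      · by_cases hcj : cIdx x j = ⟨0, hk⟩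
        · -- native-native
          rw [key, if_neg hui, if_pos hci, key, if_neg huj, if_pos hcj] at hκ
          rw [pathW_nat hk x hui hci, pathW_nat hk x huj hcj]
          exact mkW_ne_same k _ (by nlinarith) (by nlinarith) hsi1
        · rw [pathW_nat hk x hui hci]
          by_cases htj : (t : ℝ) ≤ tta hk x j
          · rw [pathW_shrink hk x huj hcj htj]
            exact mkW_ne_branch k (fun h => hcj h.symm) (by nlinarith)
          · rw [pathW_grow hk x huj hcj htj]
            push_neg at htj
            have hD0 : 0 ≤ ((t : ℝ) - tta hk x j) / (1 - tta hk x j) := by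
              apply div_nonneg <;> linarith
            have hDt : ((t : ℝ) - tta hk x j) / (1 - tta hk x j) ≤ (t : ℝ) := by
              rw [div_le_iff₀ (by linarith)]
              nlinarith
            exact mkW_ne_same k _ (by positivity) (by nlinarith) hsi1
    · -- i is an immigrant
      have hui' : 0 < uRad x i := lt_of_le_of_ne hui0 (Ne.symm hui)
      by_cases huj : uRad x j = 0
      · exfalso
        rw [key, if_neg hui, if_neg hci, key, if_pos huj] at hκ
        have : (0:ℝ) ≤ ((cIdx x i : ℕ) : ℝ) := by positivity
        linarith
      · by_cases hcj : cIdx x j = ⟨0, hk⟩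
        · exfalso
          rw [key, if_neg hui, if_neg hci, key, if_neg huj, if_pos hcj] at hκ
          have : (0:ℝ) ≤ ((cIdx x i : ℕ) : ℝ) := by positivity
          linarith
        · -- immigrant-immigrant
          have huj' : 0 < uRad x j := lt_of_le_of_ne huj0 (Ne.symm huj)
          rw [key, if_neg hui, if_neg hci, key, if_neg huj, if_neg hcj] at hκ
          by_cases hti : (t : ℝ) ≤ tta hk x i
          · have htj : (t : ℝ) ≤ tta hk x j := le_trans hti ha.le
            rw [pathW_shrink hk x hui hci hti, pathW_shrink hk x huj hcj htj]
            by_cases hcc : cIdx x i = cIdx x j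
            · -- same home branch: u i ≤ u j via the key
              have hcc' : ((cIdx x i : ℕ) : ℝ) = ((cIdx x j : ℕ) : ℝ) := by rw [hcc]
              have huu : uRad x i ≤ uRad x j := by linarith
              have hAB : (t : ℝ) / tta hk x j < (t : ℝ) / tta hk x i :=
                div_lt_div_of_pos_left ht hai ha
              have hB1 : (t : ℝ) / tta hk x j ≤ 1 := by
                rw [div_le_one haj]; linarith
              have hA1 : (t : ℝ) / tta hk x i ≤ 1 := by
                rw [div_le_one hai]; linarith
              have hA0 : 0 ≤ (t : ℝ) / tta hk x i := by positivity
              have hB0 : 0 ≤ (t : ℝ) / tta hk x j := by positivity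
              rw [hcc]
              exact (mkW_ne_same k _ (by nlinarith) (by nlinarith) (by nlinarith)).symm
            · refine (mkW_ne_branch k (fun h => hcc h.symm) ?_).symm
              have : (t : ℝ) / tta hk x j < 1 := by
                rw [div_lt_one haj]; linarith
              nlinarith
          · by_cases htj : (t : ℝ) ≤ tta hk x j
            · rw [pathW_grow hk x hui hci hti, pathW_shrink hk x huj hcj htj]
              push_neg at hti
              refine mkW_ne_branch k (fun h => hcj h.symm) ?_
              have : 0 < ((t : ℝ) - tta hk x i) / (1 - tta hk x i) := by
                apply div_pos <;> linarith
              positivity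
            · rw [pathW_grow hk x hui hci hti, pathW_grow hk x huj hcj htj]
              push_neg at hti htj
              have h1i : (0:ℝ) < 1 - tta hk x i := by linarith
              have h1j : (0:ℝ) < 1 - tta hk x j := by linarith
              have hDj0 : 0 < ((t : ℝ) - tta hk x j) / (1 - tta hk x j) := by
                apply div_pos <;> linarith
              have hDji : ((t : ℝ) - tta hk x j) / (1 - tta hk x j)
                  ≤ ((t : ℝ) - tta hk x i) / (1 - tta hk x i) := by
                rw [div_le_div_iff₀ h1j h1i]
                nlinarith
              have hDi1 : ((t : ℝ) - tta hk x i) / (1 - tta hk x i) ≤ 1 := by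
                rw [div_le_one h1i]; linarith
              have hDi0 : 0 ≤ ((t : ℝ) - tta hk x i) / (1 - tta hk x i) := by
                apply div_nonneg <;> linarith
              refine mkW_ne_same k _ (by positivity) ?_ (by nlinarith)
              nlinarith [mul_pos (sub_pos.2 hr) hDj0,
                mul_nonneg (slot_pos hk x i).le (sub_nonneg.2 hDji)]

lemma pathW_ne (hk : 1 ≤ k) (x : Fin l → Wedge k) {t : unitInterval}
    (ht : (0:ℝ) < (t : ℝ)) {i j : Fin l} (hij : i ≠ j) :
    pathW hk x i t ≠ pathW hk x j t := by
  rcases lt_trichotomy (rk hk x i) (rk hk x j) with h | h | h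
  · exact pathW_ne_of_rk_lt hk x ht h
  · exact absurd ((rk hk x).injective h) hij
  · exact (pathW_ne_of_rk_lt hk x ht h).symm



lemma projIcc_one : Set.projIcc (0:ℝ) 1 zero_le_one 1 = (1 : unitInterval) := by
  apply Subtype.ext; simp [Set.coe_projIcc]

lemma projIcc_zero : Set.projIcc (0:ℝ) 1 zero_le_one 0 = (0 : unitInterval) := by
  apply Subtype.ext; simp [Set.coe_projIcc]

end S14

open S14 in
theorem stmt14_aux (k l : ℕ) (hk : 1 ≤ k)
    (x0 x1 : Fin l → Wedge k) (hx1 : Function.Injective x1) :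
    ∃ f : Fin l → C(unitInterval, Wedge k),
      (∃ σ : Equiv.Perm (Fin l), ∀ i, f i 0 = x0 (σ i)) ∧
      (∃ τ : Equiv.Perm (Fin l), ∀ i, f i 1 = x1 (τ i)) ∧
      ∀ t : unitInterval, t ≠ 0 → ∀ i j, i ≠ j → f i t ≠ f j t := by
  set π := (rk hk x0).trans (rk hk x1).symm with hπ
  have hmatch : ∀ i, pathW hk x1 (π i) 1 = pathW hk x0 i 1 := by
    intro i
    rw [pathW_one, pathW_one]
    have h1 : rk hk x1 (π i) = rk hk x0 i := by simp [hπ]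
    unfold slot
    rw [h1]
  refine ⟨fun i => ⟨fun t => if (t:ℝ) ≤ 1/2
      then pathW hk x0 i (Set.projIcc 0 1 zero_le_one (2*(t:ℝ)))
      else pathW hk x1 (π i) (Set.projIcc 0 1 zero_le_one (2 - 2*(t:ℝ))), ?_⟩, ?_, ?_, ?_⟩
  · apply Continuous.if_le
    · exact (pathW hk x0 i).continuous.comp (continuous_projIcc.comp (by fun_prop))
    · exact (pathW hk x1 (π i)).continuous.comp (continuous_projIcc.comp (by fun_prop))
    · exact continuous_subtype_val
    · exact continuous_const
    · intro t ht
      rw [ht]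
      norm_num
      exact (hmatch i).symm
  · refine ⟨Equiv.refl _, fun i => ?_⟩
    show (if (((0:unitInterval)):ℝ) ≤ 1/2 then _ else _) = _
    rw [if_pos (by norm_num)]
    show pathW hk x0 i (Set.projIcc 0 1 zero_le_one (2*(((0:unitInterval)):ℝ))) = _
    norm_num
    exact pathW_zero hk x0 i
  · refine ⟨π, fun i => ?_⟩
    show (if (((1:unitInterval)):ℝ) ≤ 1/2 then _ else _) = _
    rw [if_neg (by norm_num)]
    show pathW hk x1 (π i) (Set.projIcc 0 1 zero_le_one (2 - 2*(((1:unitInterval)):ℝ))) = _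
    norm_num
    exact pathW_zero hk x1 (π i)
  · intro t ht i j hij
    have ht0 : (0:ℝ) < (t : ℝ) :=
      lt_of_le_of_ne t.2.1 (fun h => ht (Subtype.ext h.symm))
    show (if ((t:unitInterval):ℝ) ≤ 1/2 then _ else _)
        ≠ (if ((t:unitInterval):ℝ) ≤ 1/2 then _ else _)
    by_cases hle : (t : ℝ) ≤ 1/2
    · rw [if_pos hle, if_pos hle]
      have : (0:ℝ) < ((Set.projIcc (0:ℝ) 1 zero_le_one (2*(t:ℝ))) : ℝ) := by
        rw [Set.coe_projIcc]
        have h1 : (0:ℝ) < min 1 (2*(t:ℝ)) := lt_min one_pos (by linarith)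
        exact lt_of_lt_of_le h1 (le_max_right _ _)
      exact pathW_ne hk x0 this hij
    · rw [if_neg hle, if_neg hle]
      by_cases hz : ((Set.projIcc (0:ℝ) 1 zero_le_one (2 - 2*(t:ℝ))) : ℝ) = 0
      · have hz' : Set.projIcc (0:ℝ) 1 zero_le_one (2 - 2*(t:ℝ)) = (0 : unitInterval) :=
          Subtype.ext hz
        rw [hz', pathW_zero, pathW_zero]
        intro h
        exact hij (π.injective (hx1 h))
      · have : (0:ℝ) < ((Set.projIcc (0:ℝ) 1 zero_le_one (2 - 2*(t:ℝ))) : ℝ) :=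
          lt_of_le_of_ne (Set.projIcc 0 1 zero_le_one (2 - 2*(t:ℝ))).2.1 (Ne.symm hz)
        exact pathW_ne hk x1 this ((Equiv.injective π).ne hij)


/-- Given two `l`-element multisets `X⁰, X¹` in a wedge of `k` intervals, with `X¹`
consisting of distinct points, there are `l` continuous paths `f_i : [0,1] → X` starting
at `X⁰` and ending at `X¹` (as multisets) which are pairwise disjoint at every `t ∈ (0,1]`. -/
theorem stmt14 (k l : ℕ) (hk : 1 ≤ k)
    (x0 x1 : Fin l → Wedge k) (hx1 : Function.Injective x1) :
    ∃ f : Fin l → C(unitInterval, Wedge k),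
      (∃ σ : Equiv.Perm (Fin l), ∀ i, f i 0 = x0 (σ i)) ∧
      (∃ τ : Equiv.Perm (Fin l), ∀ i, f i 1 = x1 (τ i)) ∧
      ∀ t : unitInterval, t ≠ 0 → ∀ i j, i ≠ j → f i t ≠ f j t := by
  exact stmt14_aux k l hk x0 x1 hx1
end
end
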